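/- arXiv:2006.00191 — 2 statements merged into one kernel-verified Lean document; each statement's English description precedes it below -/
import Mathlib

section
/- Let w₁, w₂ be nonzero complex numbers with |w₁| ≠ |w₂|. Let the legitimate receiver use a (k¹_R, k¹_I)-point per-component receiver with arbitrary strictly increasing thresholds c_{R,1} < ⋯ < c_{R,k¹_R−1} and c_{I,1} < ⋯ < c_{I,k¹_I−1} (k¹_R, k¹_I ≥ 2), and let the eavesdropper use a (k²_R, k²_I)-point per-component receiver with arbitrary strictly increasing thresholds q_{R,1} < ⋯ < q_{R,k²_R−1} and q_{I,1} < ⋯ < q_{I,k²_I−1} (k²_R, k²_I ≥ 2). Then there exist φ ∈ (0,1) and x₁, x₂ ∈ ℂ such that I₁ − I₂ > 0, where I₁ is the binary-input mutual information (input x₁ with probability φ, x₂ with probability 1−φ) of the legitimate receiver's channel with gain w₁ and I₂ is that of the eavesdropper's channel with gain w₂. (Corollary 1: a positive secrecy rate is achievable for the Gaussian wiretap channel with arbitrary finite-resolution ADCs at both receivers whenever |w₁| ≠ |w₂|.) -/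
open MeasureTheory Real Filter

/-- The standard Gaussian tail function `Q(x) = ∫_x^∞ (2π)^{-1/2} e^{-u²/2} du`. -/
noncomputable def gaussQ (x : ℝ) : ℝ :=
  ∫ u in Set.Ioi x, (Real.sqrt (2 * Real.pi))⁻¹ * Real.exp (-u ^ 2 / 2)

/-- `η(t) = -t log t` (with `η(0) = 0`, automatic since `Real.log 0 = 0`). -/
noncomputable def eta (t : ℝ) : ℝ := -t * Real.log t

/-- The binary entropy function `h(p) = -p log p - (1-p) log (1-p)`. -/
noncomputable def binEnt (p : ℝ) : ℝ := eta p + eta (1 - p)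

/-- Boundary-extended Gaussian tail for a `k`-point ADC with thresholds `q`. -/
noncomputable def Qb (k : ℕ) (q : ℕ → ℝ) (t : ℝ) (l : ℕ) : ℝ :=
  if l = 0 then 1 else if l = k then 0 else gaussQ (q l - t)

/-- `p_l(t) = Q(q_{l-1} - t) - Q(q_l - t)` for the `k`-point ADC. -/
noncomputable def adcP (k : ℕ) (q : ℕ → ℝ) (t : ℝ) (l : ℕ) : ℝ :=
  Qb k q t (l - 1) - Qb k q t l

/-- Sign value of a Boolean: `true ↦ +1`, `false ↦ -1`. -/
noncomputable def sgnb (b : Bool) : ℝ := if b then 1 else -1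

/-- Transition probability of the complex Gaussian channel with gain `w` followed by
per-component one-bit ADCs: `P((s_R,s_I)|x) = Q(-s_R·Re(wx))·Q(-s_I·Im(wx))`. -/
noncomputable def p1bitC (w x : ℂ) (s : Bool × Bool) : ℝ :=
  gaussQ (-(sgnb s.1) * (w * x).re) * gaussQ (-(sgnb s.2) * (w * x).im)

/-- Binary-input mutual information of the complex Gaussian channel with gain `w`
followed by per-component one-bit ADCs, input `x₁` w.p. `φ` and `x₂` w.p. `1-φ`. -/
noncomputable def miOneBitC (w : ℂ) (φ : ℝ) (x₁ x₂ : ℂ) : ℝ :=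
  ∑ s : Bool × Bool,
    (eta (φ * p1bitC w x₁ s + (1 - φ) * p1bitC w x₂ s)
      - φ * eta (p1bitC w x₁ s) - (1 - φ) * eta (p1bitC w x₂ s))

/-- Transition probability of the complex Gaussian channel with gain `w` followed by a
`(k_R, k_I)`-point per-component receiver with thresholds `qR`, `qI`:
`P((i,l)|x) = p_{R,i}(Re(wx)) · p_{I,l}(Im(wx))`. -/
noncomputable def pADCC (w : ℂ) (kR kI : ℕ) (qR qI : ℕ → ℝ) (x : ℂ) (y : ℕ × ℕ) : ℝ :=
  adcP kR qR ((w * x).re) y.1 * adcP kI qI ((w * x).im) y.2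

/-- Binary-input mutual information of the complex Gaussian channel with gain `w`
followed by a `(k_R, k_I)`-point per-component receiver, input `x₁` w.p. `φ` and
`x₂` w.p. `1-φ`. -/
noncomputable def miADCC (w : ℂ) (kR kI : ℕ) (qR qI : ℕ → ℝ) (φ : ℝ) (x₁ x₂ : ℂ) : ℝ :=
  ∑ y ∈ Finset.Icc 1 kR ×ˢ Finset.Icc 1 kI,
    (eta (φ * pADCC w kR kI qR qI x₁ y + (1 - φ) * pADCC w kR kI qR qI x₂ y)
      - φ * eta (pADCC w kR kI qR qI x₁ y) - (1 - φ) * eta (pADCC w kR kI qR qI x₂ y))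
/-! ### Section A : Gaussian tail lemmas -/

noncomputable def gpdf (u : ℝ) : ℝ := (Real.sqrt (2 * Real.pi))⁻¹ * Real.exp (-u ^ 2 / 2)

lemma gaussQ_eq_gpdf (x : ℝ) : gaussQ x = ∫ u in Set.Ioi x, gpdf u := rfl

lemma kappa_pos : 0 < (Real.sqrt (2 * Real.pi))⁻¹ := by
  have : 0 < Real.sqrt (2 * Real.pi) := Real.sqrt_pos.2 (by positivity)
  positivity

lemma kappa_le_one : (Real.sqrt (2 * Real.pi))⁻¹ ≤ 1 := by
  rw [inv_le_one_iff₀]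
  right
  rw [Real.one_le_sqrt]
  nlinarith [Real.pi_gt_three]

lemma gpdf_pos (u : ℝ) : 0 < gpdf u := by
  unfold gpdf
  have := kappa_pos
  positivity

lemma integrable_gpdf : Integrable gpdf := by
  have h := (integrable_exp_neg_mul_sq (show (0:ℝ) < 1/2 by norm_num)).const_mul
    ((Real.sqrt (2 * Real.pi))⁻¹)
  refine h.congr ?_
  filter_upwards with u
  unfold gpdf
  ring_nf

lemma integral_gpdf : ∫ u, gpdf u = 1 := by
  unfold gpdf
  rw [MeasureTheory.integral_const_mul]
  have h : ∀ u : ℝ, -u ^ 2 / 2 = -((1:ℝ)/2) * u ^ 2 := fun u => by ring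
  simp_rw [h]
  rw [integral_gaussian]
  have : Real.pi / (1/2) = 2 * Real.pi := by ring
  rw [this]
  rw [inv_mul_cancel₀]
  exact ne_of_gt (Real.sqrt_pos.2 (by positivity))

lemma gaussQ_nonneg (x : ℝ) : 0 ≤ gaussQ x :=
  setIntegral_nonneg measurableSet_Ioi (fun u _ => (gpdf_pos u).le)

lemma gpdf_ge {c u : ℝ} (h : |u| ≤ c) :
    (Real.sqrt (2 * Real.pi))⁻¹ * Real.exp (-c ^ 2 / 2) ≤ gpdf u := by
  unfold gpdf
  have hu2 : u ^ 2 ≤ c ^ 2 := sq_le_sq' (neg_le_of_abs_le h) (le_of_abs_le h)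
  exact mul_le_mul_of_nonneg_left (Real.exp_le_exp.2 (by linarith)) kappa_pos.le

lemma intLow {x y : ℝ} (hxy : x ≤ y) {c : ℝ} (hc : ∀ u ∈ Set.Ioc x y, |u| ≤ c) :
    (y - x) * ((Real.sqrt (2 * Real.pi))⁻¹ * Real.exp (-c ^ 2 / 2))
      ≤ ∫ u in Set.Ioc x y, gpdf u := by
  have h1 : ∫ u in Set.Ioc x y, ((Real.sqrt (2 * Real.pi))⁻¹ * Real.exp (-c ^ 2 / 2))
      = (y - x) * ((Real.sqrt (2 * Real.pi))⁻¹ * Real.exp (-c ^ 2 / 2)) := by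
    rw [setIntegral_const, measureReal_def, Real.volume_Ioc, smul_eq_mul, ENNReal.toReal_ofReal (by linarith)]
  rw [← h1]
  refine setIntegral_mono_on (integrableOn_const measure_Ioc_lt_top.ne)
    (integrable_gpdf.integrableOn) measurableSet_Ioc (fun u hu => gpdf_ge (hc u hu))

lemma gaussQ_split {x y : ℝ} (hxy : x ≤ y) :
    gaussQ x = (∫ u in Set.Ioc x y, gpdf u) + gaussQ y := by
  rw [gaussQ_eq_gpdf, gaussQ_eq_gpdf, ← Set.Ioc_union_Ioi_eq_Ioi hxy]
  exact setIntegral_union (Set.Ioc_disjoint_Ioi le_rfl) measurableSet_Ioi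
    integrable_gpdf.integrableOn integrable_gpdf.integrableOn

lemma gaussQ_anti {x y : ℝ} (hxy : x ≤ y) : gaussQ y ≤ gaussQ x := by
  rw [gaussQ_split hxy]
  have : 0 ≤ ∫ u in Set.Ioc x y, gpdf u :=
    setIntegral_nonneg measurableSet_Ioc (fun u _ => (gpdf_pos u).le)
  linarith

lemma gaussQ_strict_anti {x y : ℝ} (hxy : x < y) : gaussQ y < gaussQ x := by
  rw [gaussQ_split hxy.le]
  have h := intLow hxy.le (c := max |x| |y|) (fun u hu => by
    rw [abs_le]
    constructor
    · have := neg_abs_le x; have := le_max_left |x| |y|; linarith [hu.1]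
    · have := le_abs_self y; have := le_max_right |x| |y|; linarith [hu.2])
  have hpos : 0 < (y - x) * ((Real.sqrt (2 * Real.pi))⁻¹ *
      Real.exp (-(max |x| |y|) ^ 2 / 2)) := by
    have h1 : 0 < y - x := by linarith
    have h2 := kappa_pos
    positivity
  linarith

lemma gaussQ_pos (x : ℝ) : 0 < gaussQ x := by
  have h := gaussQ_strict_anti (show x < x + 1 by linarith)
  have := gaussQ_nonneg (x + 1)
  linarith

lemma gaussQ_add_reflect (x : ℝ) : gaussQ x + gaussQ (-x) = 1 := by
  have heven : ∀ u : ℝ, gpdf (-u) = gpdf u := fun u => by unfold gpdf; ring_nf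
  have h2 : gaussQ (-x) = ∫ u in Set.Iic x, gpdf u := by
    rw [gaussQ_eq_gpdf]
    have : (∫ u in Set.Iic x, gpdf u) = ∫ u in Set.Iic x, gpdf (-u) := by
      simp_rw [heven]
    rw [this, integral_comp_neg_Iic]
  rw [h2, add_comm, gaussQ_eq_gpdf, intervalIntegral.integral_Iic_add_Ioi
    integrable_gpdf.integrableOn integrable_gpdf.integrableOn, integral_gpdf]

lemma gaussQ_reflect (x : ℝ) : gaussQ (-x) = 1 - gaussQ x := by
  have := gaussQ_add_reflect x; linarith

lemma gaussQ_lt_one (x : ℝ) : gaussQ x < 1 := by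
  have := gaussQ_pos (-x); have := gaussQ_add_reflect x; linarith

lemma gaussQ_le_one (x : ℝ) : gaussQ x ≤ 1 := (gaussQ_lt_one x).le

/-- Lower tail bound. -/
lemma gaussQ_ge {s : ℝ} (hs : 0 ≤ s) :
    (Real.sqrt (2 * Real.pi))⁻¹ * Real.exp (-(s + 1) ^ 2 / 2) ≤ gaussQ s := by
  have h := intLow (show s ≤ s + 1 by linarith) (c := s + 1) (fun u hu => by
    rw [abs_le]; constructor <;> [linarith [hu.1]; linarith [hu.2]])
  have h2 := gaussQ_split (show s ≤ s + 1 by linarith)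
  have := gaussQ_nonneg (s + 1)
  simp only [add_sub_cancel_left, one_mul] at h
  linarith

/-- Chernoff upper tail bound. -/
lemma gaussQ_le {s : ℝ} (hs : 1 ≤ s) : gaussQ s ≤ Real.exp (-s ^ 2 / 2) := by
  have hs0 : 0 < s := by linarith
  -- pointwise bound
  have hpt : ∀ u ∈ Set.Ioi s, gpdf u ≤
      (Real.sqrt (2 * Real.pi))⁻¹ * Real.exp (s ^ 2 / 2) * Real.exp (-s * u) := by
    intro u hu
    unfold gpdf
    rw [mul_assoc, ← Real.exp_add]
    refine mul_le_mul_of_nonneg_left (Real.exp_le_exp.2 ?_) kappa_pos.le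
    nlinarith [sq_nonneg (u - s)]
  -- integral of the exponential
  have hF : ∀ u ∈ Set.Ici s, HasDerivAt (fun u : ℝ => -Real.exp (-s * u) / s)
      (Real.exp (-s * u)) u := by
    intro u _
    have h1 : HasDerivAt (fun u : ℝ => -s * u) (-s) u := by
      simpa using (hasDerivAt_id u).const_mul (-s)
    have h2 := (h1.exp).neg.div_const s
    refine h2.congr_deriv ?_
    rw [mul_neg, neg_neg, mul_div_assoc, div_self hs0.ne', mul_one]
  have hInt : IntegrableOn (fun u : ℝ => Real.exp (-s * u)) (Set.Ioi s) :=
    exp_neg_integrableOn_Ioi s hs0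
  have hT : Tendsto (fun u : ℝ => -Real.exp (-s * u) / s) atTop (nhds 0) := by
    have : Tendsto (fun u : ℝ => -s * u) atTop atBot :=
      tendsto_id.const_mul_atTop_of_neg (by linarith)
    have h3 := (Real.tendsto_exp_atBot.comp this).neg.div_const s
    simpa using h3
  have hval : ∫ u in Set.Ioi s, Real.exp (-s * u) = Real.exp (-s * s) / s := by
    rw [integral_Ioi_of_hasDerivAt_of_tendsto' hF hInt hT]
    field_simp
    ring
  have h1 : gaussQ s ≤ ∫ u in Set.Ioi s,
      (Real.sqrt (2 * Real.pi))⁻¹ * Real.exp (s ^ 2 / 2) * Real.exp (-s * u) := by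
    rw [gaussQ_eq_gpdf]
    refine setIntegral_mono_on integrable_gpdf.integrableOn
      ((hInt.const_mul _)) measurableSet_Ioi hpt
  rw [MeasureTheory.integral_const_mul, hval] at h1
  have hh : Real.exp (s ^ 2 / 2) * Real.exp (-s * s) = Real.exp (-s ^ 2 / 2) := by
    rw [← Real.exp_add]; ring_nf
  calc gaussQ s ≤ (Real.sqrt (2 * Real.pi))⁻¹ * Real.exp (s ^ 2 / 2) *
        (Real.exp (-s * s) / s) := h1
    _ = ((Real.sqrt (2 * Real.pi))⁻¹ / s) * (Real.exp (s ^ 2 / 2) * Real.exp (-s * s)) := by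
        ring
    _ = ((Real.sqrt (2 * Real.pi))⁻¹ / s) * Real.exp (-s ^ 2 / 2) := by rw [hh]
    _ ≤ 1 * Real.exp (-s ^ 2 / 2) := by
        refine mul_le_mul_of_nonneg_right ?_ (Real.exp_pos _).le
        exact (div_le_one hs0).2 (le_trans kappa_le_one hs)
    _ = Real.exp (-s ^ 2 / 2) := one_mul _
/-! ### Section B : eta lemmas -/

lemma eta_eq_negMulLog (t : ℝ) : eta t = Real.negMulLog t := by
  unfold eta Real.negMulLog
  ring

lemma eta_nonneg {x : ℝ} (h0 : 0 ≤ x) (h1 : x ≤ 1) : 0 ≤ eta x := by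
  rw [eta_eq_negMulLog]; exact Real.negMulLog_nonneg h0 h1

lemma eta_le_one_sub {x : ℝ} (h0 : 0 < x) : eta x ≤ 1 - x := by
  have h := Real.log_le_sub_one_of_pos (inv_pos.2 h0)
  rw [Real.log_inv] at h
  unfold eta
  have hx : x * x⁻¹ = 1 := mul_inv_cancel₀ h0.ne'
  nlinarith

lemma eta_le_two_sqrt {x : ℝ} (h0 : 0 ≤ x) : eta x ≤ 2 * Real.sqrt x := by
  rcases eq_or_lt_of_le h0 with h | h
  · simp [eta, ← h]
  · have hs : 0 < Real.sqrt x := Real.sqrt_pos.2 h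
    have hl := Real.log_le_sub_one_of_pos (inv_pos.2 hs)
    rw [Real.log_inv] at hl
    have hlog : Real.log x = 2 * Real.log (Real.sqrt x) := by
      rw [Real.log_sqrt h0]; ring
    have hsq : Real.sqrt x * Real.sqrt x = x := Real.mul_self_sqrt h0
    unfold eta
    rw [hlog]
    have h1 : -Real.log (Real.sqrt x) ≤ (Real.sqrt x)⁻¹ := by
      have := (inv_pos.2 hs)
      nlinarith
    have h2 : x * (Real.sqrt x)⁻¹ = Real.sqrt x := by
      nth_rewrite 1 [← hsq]
      rw [mul_inv_cancel_right₀ hs.ne']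
    nlinarith

lemma eta_le_eps {m ε : ℝ} (hm0 : 0 ≤ m) (hm1 : m ≤ 1) (hε0 : 0 < ε) (hε1 : ε ≤ 1) :
    eta m ≤ 2 * ε + 2 * m * Real.log ε⁻¹ := by
  have hlogε : 0 ≤ Real.log ε⁻¹ := by
    rw [Real.log_inv]
    have := Real.log_nonpos hε0.le hε1
    linarith
  rcases le_or_gt m (ε ^ 2) with h | h
  · have h1 : eta m ≤ 2 * Real.sqrt m := eta_le_two_sqrt hm0
    have h2 : Real.sqrt m ≤ ε := by
      calc Real.sqrt m ≤ Real.sqrt (ε ^ 2) := Real.sqrt_le_sqrt h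
        _ = ε := Real.sqrt_sq hε0.le
    nlinarith
  · have hm : 0 < m := lt_trans (by positivity) h
    have h1 : Real.log m⁻¹ ≤ Real.log (ε ^ 2)⁻¹ := by
      refine Real.log_le_log (by positivity) ?_
      gcongr
    have h2 : Real.log (ε ^ 2)⁻¹ = 2 * Real.log ε⁻¹ := by
      rw [Real.log_inv, Real.log_inv, Real.log_pow]
      push_cast; ring
    have h3 : eta m = m * Real.log m⁻¹ := by unfold eta; rw [Real.log_inv]; ring
    rw [h3]
    have h4 : m * Real.log m⁻¹ ≤ m * (2 * Real.log ε⁻¹) := by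
      refine mul_le_mul_of_nonneg_left ?_ hm0
      rw [← h2]; exact h1
    nlinarith

lemma eta_concave2 {a b : ℝ} (ha : 0 ≤ a) (hb : 0 ≤ b) :
    eta a / 2 + eta b / 2 ≤ eta ((a + b) / 2) := by
  have h2 := Real.concaveOn_negMulLog.2 (Set.mem_Ici.2 ha) (Set.mem_Ici.2 hb)
    (show (0:ℝ) ≤ 1/2 by norm_num) (show (0:ℝ) ≤ 1/2 by norm_num) (by norm_num)
  simp only [smul_eq_mul] at h2
  rw [eta_eq_negMulLog, eta_eq_negMulLog, eta_eq_negMulLog]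
  calc Real.negMulLog a / 2 + Real.negMulLog b / 2
      = 1/2 * Real.negMulLog a + 1/2 * Real.negMulLog b := by ring
    _ ≤ Real.negMulLog (1/2 * a + 1/2 * b) := h2
    _ = Real.negMulLog ((a + b)/2) := by ring_nf

lemma eta_strict_concave2 {a b : ℝ} (ha : 0 ≤ a) (hb : 0 ≤ b) (hab : a ≠ b) :
    eta a / 2 + eta b / 2 < eta ((a + b) / 2) := by
  have h2 := Real.strictConcaveOn_negMulLog.2 (Set.mem_Ici.2 ha) (Set.mem_Ici.2 hb)
    hab (show (0:ℝ) < 1/2 by norm_num) (show (0:ℝ) < 1/2 by norm_num) (by norm_num)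
  simp only [smul_eq_mul] at h2
  rw [eta_eq_negMulLog, eta_eq_negMulLog, eta_eq_negMulLog]
  calc Real.negMulLog a / 2 + Real.negMulLog b / 2
      = 1/2 * Real.negMulLog a + 1/2 * Real.negMulLog b := by ring
    _ < Real.negMulLog (1/2 * a + 1/2 * b) := h2
    _ = Real.negMulLog ((a + b)/2) := by ring_nf

lemma eta_identity {a b : ℝ} (ha : 0 < a) (hb : 0 < b) :
    eta ((a + b) / 2) - eta a / 2 - eta b / 2
      = a / 2 * Real.log (a / ((a + b) / 2)) + b / 2 * Real.log (b / ((a + b) / 2)) := by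
  have hm : 0 < (a + b) / 2 := by linarith
  rw [Real.log_div ha.ne' hm.ne', Real.log_div hb.ne' hm.ne']
  unfold eta
  ring

lemma eta_gain {a b : ℝ} (ha : 0 < a) (hab : 36 * a ≤ b) :
    b / 16 ≤ eta ((a + b) / 2) - eta a / 2 - eta b / 2 := by
  have hb : 0 < b := by linarith
  have hm : 0 < (a + b) / 2 := by linarith
  have hab' : a ≤ b := by linarith
  rw [eta_identity ha hb]
  -- second term
  have h1 : Real.log (((a + b) / 2) / b) ≤ ((a + b) / 2) / b - 1 :=
    Real.log_le_sub_one_of_pos (by positivity)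
  have h2 : Real.log (b / ((a + b) / 2)) = -Real.log (((a + b) / 2) / b) := by
    rw [← Real.log_inv, inv_div]
  have t2 : (b - a) / 4 ≤ b / 2 * Real.log (b / ((a + b) / 2)) := by
    rw [h2]
    have hd : ((a + b) / 2) / b - 1 = (a - b) / (2 * b) := by field_simp; ring
    have h3 : -((a - b) / (2 * b)) ≤ -Real.log (((a + b) / 2) / b) := by
      rw [← hd]; linarith
    have h4 : b / 2 * (-((a - b) / (2 * b))) = (b - a) / 4 := by field_simp; ring
    nlinarith [mul_le_mul_of_nonneg_left h3 (show (0:ℝ) ≤ b / 2 by linarith)]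
  -- first term
  have t1 : -(b / 6) ≤ a / 2 * Real.log (a / ((a + b) / 2)) := by
    have hx : (0:ℝ) < a / b := by positivity
    have hx36 : a / b ≤ 1 / 36 := by rw [div_le_div_iff₀ hb (by norm_num)]; linarith
    have hsq : Real.sqrt (a / b) ≤ 1 / 6 := by
      have h5 : Real.sqrt (a / b) ≤ Real.sqrt (1 / 36) := Real.sqrt_le_sqrt hx36
      have h36 : Real.sqrt (1 / 36 : ℝ) = 1 / 6 := by
        rw [show (1 / 36 : ℝ) = (1 / 6) ^ 2 by norm_num, Real.sqrt_sq (by norm_num)]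
      linarith
    have he : eta (a / b) ≤ 1 / 3 := by
      have := eta_le_two_sqrt hx.le; linarith
    have heq : a / 2 * Real.log (b / a) = b / 2 * eta (a / b) := by
      unfold eta
      rw [Real.log_div hb.ne' ha.ne', Real.log_div ha.ne' hb.ne']
      field_simp
      ring
    have hmono : Real.log (((a + b) / 2) / a) ≤ Real.log (b / a) := by
      refine Real.log_le_log (by positivity) ?_
      gcongr
      linarith
    have hlogflip : Real.log (a / ((a + b) / 2)) = -Real.log (((a + b) / 2) / a) := by
      rw [← Real.log_inv, inv_div]
    rw [hlogflip]
    have h6 : a / 2 * Real.log (((a + b) / 2) / a) ≤ b / 6 := by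
      have h7 : a / 2 * Real.log (((a + b) / 2) / a) ≤ a / 2 * Real.log (b / a) := by
        refine mul_le_mul_of_nonneg_left hmono (by linarith)
      rw [heq] at h7
      nlinarith
    nlinarith
  linarith
/-! ### Section C : generic finite-output MI lemmas (φ = 1/2) -/

noncomputable def mig {ι : Type*} (S : Finset ι) (a b : ι → ℝ) : ℝ :=
  ∑ y ∈ S, (eta ((a y + b y) / 2) - eta (a y) / 2 - eta (b y) / 2)

lemma eta_le_one_sub' {x : ℝ} (h0 : 0 ≤ x) : eta x ≤ 1 - x := by
  rcases eq_or_lt_of_le h0 with h | h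
  · simp [eta, ← h]
  · exact eta_le_one_sub h

section MIG

variable {ι : Type*} {S : Finset ι} {a b : ι → ℝ}

lemma mig_nonneg (ha : ∀ y ∈ S, 0 ≤ a y) (hb : ∀ y ∈ S, 0 ≤ b y) :
    0 ≤ mig S a b :=
  Finset.sum_nonneg fun y hy => by linarith [eta_concave2 (ha y hy) (hb y hy)]

lemma mig_pos (ha : ∀ y ∈ S, 0 ≤ a y) (hb : ∀ y ∈ S, 0 ≤ b y)
    {y₀ : ι} (hy₀ : y₀ ∈ S) (hne : a y₀ ≠ b y₀) : 0 < mig S a b := by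
  refine Finset.sum_pos' (fun y hy => by linarith [eta_concave2 (ha y hy) (hb y hy)]) ?_
  exact ⟨y₀, hy₀, by linarith [eta_strict_concave2 (ha y₀ hy₀) (hb y₀ hy₀) hne]⟩

lemma sum_mid (hsa : ∑ y ∈ S, a y = 1) (hsb : ∑ y ∈ S, b y = 1) :
    ∑ y ∈ S, (a y + b y) / 2 = 1 := by
  rw [← Finset.sum_div, Finset.sum_add_distrib, hsa, hsb]
  norm_num

/-- Generic upper bound for the MI when both distributions put mass `≥ 1-ε`
on a common cell `y₀`. -/
lemma mig_le_corner (ha0 : ∀ y ∈ S, 0 ≤ a y) (ha1 : ∀ y ∈ S, a y ≤ 1)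
    (hb0 : ∀ y ∈ S, 0 ≤ b y) (hb1 : ∀ y ∈ S, b y ≤ 1)
    (hsa : ∑ y ∈ S, a y = 1) (hsb : ∑ y ∈ S, b y = 1)
    {y₀ : ι} (hy₀ : y₀ ∈ S) {ε : ℝ} (hε0 : 0 < ε) (hε1 : ε ≤ 1)
    (hay : 1 - ε ≤ a y₀) (hby : 1 - ε ≤ b y₀) :
    mig S a b ≤ (2 * S.card + 1) * ε + 2 * ε * Real.log ε⁻¹ := by
  classical
  have hlogε : 0 ≤ Real.log ε⁻¹ := by
    rw [Real.log_inv]; linarith [Real.log_nonpos hε0.le hε1]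
  have hm0 : ∀ y ∈ S, 0 ≤ (a y + b y) / 2 := fun y hy => by
    linarith [ha0 y hy, hb0 y hy]
  have hm1 : ∀ y ∈ S, (a y + b y) / 2 ≤ 1 := fun y hy => by
    linarith [ha1 y hy, hb1 y hy]
  have hsm : ∑ y ∈ S, (a y + b y) / 2 = 1 := sum_mid hsa hsb
  have h2 := Finset.add_sum_erase S (fun y => (a y + b y) / 2) hy₀
  rw [hsm] at h2
  have herase : ∑ y ∈ S.erase y₀, (a y + b y) / 2 ≤ ε := by linarith
  have hterm : ∀ y ∈ S, eta ((a y + b y) / 2) - eta (a y) / 2 - eta (b y) / 2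
      ≤ eta ((a y + b y) / 2) := fun y hy => by
    linarith [eta_nonneg (ha0 y hy) (ha1 y hy), eta_nonneg (hb0 y hy) (hb1 y hy)]
  have key : mig S a b = (eta ((a y₀ + b y₀) / 2) - eta (a y₀) / 2 - eta (b y₀) / 2)
      + ∑ y ∈ S.erase y₀, (eta ((a y + b y) / 2) - eta (a y) / 2 - eta (b y) / 2) := by
    rw [mig]
    exact (Finset.add_sum_erase S _ hy₀).symm
  have hcorner : eta ((a y₀ + b y₀) / 2) - eta (a y₀) / 2 - eta (b y₀) / 2 ≤ ε := by
    have h3 := eta_le_one_sub' (hm0 y₀ hy₀)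
    have h4 : 1 - ε ≤ (a y₀ + b y₀) / 2 := by linarith
    linarith [hterm y₀ hy₀]
  have hrest : ∑ y ∈ S.erase y₀,
      (eta ((a y + b y) / 2) - eta (a y) / 2 - eta (b y) / 2)
      ≤ ∑ y ∈ S.erase y₀, (2 * ε + 2 * Real.log ε⁻¹ * ((a y + b y) / 2)) := by
    refine Finset.sum_le_sum fun y hy => ?_
    have hyS := Finset.mem_of_mem_erase hy
    have h5 := eta_le_eps (hm0 y hyS) (hm1 y hyS) hε0 hε1
    have h6 := hterm y hyS
    nlinarith [hlogε]
  have hrest2 : ∑ y ∈ S.erase y₀, (2 * ε + 2 * Real.log ε⁻¹ * ((a y + b y) / 2))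
      ≤ (S.card : ℝ) * (2 * ε) + 2 * Real.log ε⁻¹ * ε := by
    rw [Finset.sum_add_distrib, Finset.sum_const, ← Finset.mul_sum, nsmul_eq_mul]
    have hcard : (↑(S.erase y₀).card : ℝ) ≤ (S.card : ℝ) := by
      exact_mod_cast Finset.card_le_card (Finset.erase_subset y₀ S)
    have h8 := mul_le_mul_of_nonneg_left herase
      (by linarith : (0:ℝ) ≤ 2 * Real.log ε⁻¹)
    nlinarith
  rw [key]
  nlinarith [hcorner, hrest, hrest2]

end MIG

/-! per-point gap lemmas -/

lemma gap_point {a b : ℝ} (ha : 0 < a) (hb : 0 < b) :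
    (a + b) / 2 * Real.log 2 - (eta ((a + b) / 2) - eta a / 2 - eta b / 2)
      = a / 2 * Real.log ((a + b) / a) + b / 2 * Real.log ((a + b) / b) := by
  have hab : (0:ℝ) < a + b := by linarith
  have hm : (0:ℝ) < (a + b) / 2 := by linarith
  rw [eta_identity ha hb, Real.log_div hab.ne' ha.ne', Real.log_div hab.ne' hb.ne',
    Real.log_div ha.ne' hm.ne', Real.log_div hb.ne' hm.ne',
    Real.log_div hab.ne' (two_ne_zero)]
  ring

lemma gap_point_nonneg {a b : ℝ} (ha : 0 < a) (hb : 0 < b) :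
    0 ≤ a / 2 * Real.log ((a + b) / a) + b / 2 * Real.log ((a + b) / b) := by
  have h1 : 0 ≤ Real.log ((a + b) / a) :=
    Real.log_nonneg ((one_le_div ha).2 (by linarith))
  have h2 : 0 ≤ Real.log ((a + b) / b) :=
    Real.log_nonneg ((one_le_div hb).2 (by linarith))
  positivity

lemma gap_point_ge {a b : ℝ} (ha : 0 < a) (hb : 0 < b) (hab : a ≤ b) :
    a / 4 ≤ a / 2 * Real.log ((a + b) / a) + b / 2 * Real.log ((a + b) / b) := by
  have hab' : (0:ℝ) < a + b := by linarith
  have h1 : 0 ≤ Real.log ((a + b) / a) :=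
    Real.log_nonneg ((one_le_div ha).2 (by linarith))
  have h2 : Real.log (b / (a + b)) ≤ b / (a + b) - 1 :=
    Real.log_le_sub_one_of_pos (by positivity)
  have h3 : Real.log ((a + b) / b) = -Real.log (b / (a + b)) := by
    rw [← Real.log_inv, inv_div]
  have h4 : a / (a + b) ≤ Real.log ((a + b) / b) := by
    rw [h3]
    have hba : b / (a + b) - 1 = -(a / (a + b)) := by field_simp; ring
    linarith
  have h5 : b / 2 * (a / (a + b)) ≤ b / 2 * Real.log ((a + b) / b) :=
    mul_le_mul_of_nonneg_left h4 (by linarith)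
  have h6 : a / 4 ≤ b / 2 * (a / (a + b)) := by
    rw [div_mul_div_comm, div_le_div_iff₀ (by norm_num) (by positivity)]
    nlinarith
  nlinarith [mul_le_mul_of_nonneg_left h1 (show (0:ℝ) ≤ a / 2 by linarith)]

lemma termA_le {a b ε : ℝ} (ha0 : 0 < a) (ha1 : a ≤ 1) (hb0 : 0 < b) (hb1 : b ≤ 1)
    (hε0 : 0 < ε) (hε1 : ε ≤ 1 / 2) :
    a / 2 * Real.log ((a + b) / a)
      ≤ ε + min a b / 2 * (Real.log 2 + 2 * Real.log ε⁻¹) := by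
  have h2ε : (2:ℝ) ≤ ε⁻¹ := by
    rw [show (2:ℝ) = (1/2 : ℝ)⁻¹ by norm_num]
    gcongr
  have hlogε : Real.log 2 ≤ Real.log ε⁻¹ := Real.log_le_log (by norm_num) h2ε
  have hlog2 : (0:ℝ) < Real.log 2 := Real.log_pos (by norm_num)
  rcases le_total a b with h | h
  · rw [min_eq_left h]
    have h1 : (a + b) / a ≤ 2 / a := by gcongr; linarith
    have hlog : Real.log ((a + b) / a) ≤ Real.log 2 + Real.log a⁻¹ := by
      calc Real.log ((a + b) / a) ≤ Real.log (2 / a) :=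
            Real.log_le_log (by positivity) h1
        _ = Real.log 2 + Real.log a⁻¹ := by
            rw [Real.log_div two_ne_zero ha0.ne', Real.log_inv]; ring
    have heta : a * Real.log a⁻¹ = eta a := by
      unfold eta; rw [Real.log_inv]; ring
    have h2 : eta a ≤ 2 * ε + 2 * a * Real.log ε⁻¹ :=
      eta_le_eps ha0.le ha1 hε0 (by linarith)
    calc a / 2 * Real.log ((a + b) / a)
        ≤ a / 2 * (Real.log 2 + Real.log a⁻¹) :=
          mul_le_mul_of_nonneg_left hlog (by positivity)
      _ = a / 2 * Real.log 2 + eta a / 2 := by rw [← heta]; ring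
      _ ≤ a / 2 * Real.log 2 + (2 * ε + 2 * a * Real.log ε⁻¹) / 2 := by linarith
      _ = ε + a / 2 * (Real.log 2 + 2 * Real.log ε⁻¹) := by ring
  · rw [min_eq_right h]
    have hlogb : Real.log ((a + b) / a) ≤ b / a := by
      have h2 := Real.log_le_sub_one_of_pos (show (0:ℝ) < (a + b) / a by positivity)
      have he : (a + b) / a - 1 = b / a := by field_simp; ring
      linarith
    have ha2 : a / 2 * Real.log ((a + b) / a) ≤ b / 2 := by
      calc a / 2 * Real.log ((a + b) / a) ≤ a / 2 * (b / a) :=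
            mul_le_mul_of_nonneg_left hlogb (by positivity)
        _ = b / 2 := by field_simp
    have hK : 1 ≤ Real.log 2 + 2 * Real.log ε⁻¹ := by
      have := Real.log_two_gt_d9
      linarith
    calc a / 2 * Real.log ((a + b) / a) ≤ b / 2 := ha2
      _ ≤ b / 2 * (Real.log 2 + 2 * Real.log ε⁻¹) :=
          le_mul_of_one_le_right (by positivity) hK
      _ ≤ ε + b / 2 * (Real.log 2 + 2 * Real.log ε⁻¹) := by linarith

lemma gap_point_le {a b ε : ℝ} (ha0 : 0 < a) (ha1 : a ≤ 1) (hb0 : 0 < b) (hb1 : b ≤ 1)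
    (hε0 : 0 < ε) (hε1 : ε ≤ 1 / 2) (hmin : min a b ≤ ε) :
    a / 2 * Real.log ((a + b) / a) + b / 2 * Real.log ((a + b) / b)
      ≤ ε * (3 + 2 * Real.log ε⁻¹) := by
  have hA := termA_le ha0 ha1 hb0 hb1 hε0 hε1
  have hB := termA_le hb0 hb1 ha0 ha1 hε0 hε1
  rw [add_comm b a, min_comm b a] at hB
  have hK0 : 0 ≤ Real.log 2 + 2 * Real.log ε⁻¹ := by
    have h2ε : (2:ℝ) ≤ ε⁻¹ := by
      rw [show (2:ℝ) = (1/2 : ℝ)⁻¹ by norm_num]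
      gcongr
    have hlogε : Real.log 2 ≤ Real.log ε⁻¹ := Real.log_le_log (by norm_num) h2ε
    have hlog2 : (0:ℝ) < Real.log 2 := Real.log_pos (by norm_num)
    linarith
  have hmin0 : 0 ≤ min a b := le_min ha0.le hb0.le
  have hlog2lt : Real.log 2 ≤ 1 := by
    have := Real.log_two_lt_d9
    linarith
  have hmul := mul_le_mul_of_nonneg_right hmin hK0
  nlinarith

section GAP

variable {ι : Type*} {S : Finset ι} {a b : ι → ℝ}

lemma gap_eq (ha0 : ∀ y ∈ S, 0 < a y) (hb0 : ∀ y ∈ S, 0 < b y)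
    (hsa : ∑ y ∈ S, a y = 1) (hsb : ∑ y ∈ S, b y = 1) :
    Real.log 2 - mig S a b
      = ∑ y ∈ S, (a y / 2 * Real.log ((a y + b y) / a y)
          + b y / 2 * Real.log ((a y + b y) / b y)) := by
  have h1 : Real.log 2 = ∑ y ∈ S, ((a y + b y) / 2) * Real.log 2 := by
    rw [← Finset.sum_mul, sum_mid hsa hsb, one_mul]
  rw [mig, h1, ← Finset.sum_sub_distrib]
  exact Finset.sum_congr rfl fun y hy => gap_point (ha0 y hy) (hb0 y hy)

lemma gap_ge (ha0 : ∀ y ∈ S, 0 < a y) (hb0 : ∀ y ∈ S, 0 < b y)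
    (hsa : ∑ y ∈ S, a y = 1) (hsb : ∑ y ∈ S, b y = 1)
    {y₀ : ι} (hy₀ : y₀ ∈ S) (hle : a y₀ ≤ b y₀) :
    a y₀ / 4 ≤ Real.log 2 - mig S a b := by
  rw [gap_eq ha0 hb0 hsa hsb]
  refine le_trans (gap_point_ge (ha0 y₀ hy₀) (hb0 y₀ hy₀) hle) ?_
  exact Finset.single_le_sum
    (fun y hy => gap_point_nonneg (ha0 y hy) (hb0 y hy)) hy₀

lemma gap_le (ha0 : ∀ y ∈ S, 0 < a y) (ha1 : ∀ y ∈ S, a y ≤ 1)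
    (hb0 : ∀ y ∈ S, 0 < b y) (hb1 : ∀ y ∈ S, b y ≤ 1)
    (hsa : ∑ y ∈ S, a y = 1) (hsb : ∑ y ∈ S, b y = 1)
    {ε : ℝ} (hε0 : 0 < ε) (hε1 : ε ≤ 1 / 2)
    (hmin : ∀ y ∈ S, min (a y) (b y) ≤ ε) :
    Real.log 2 - mig S a b ≤ (S.card : ℝ) * (ε * (3 + 2 * Real.log ε⁻¹)) := by
  rw [gap_eq ha0 hb0 hsa hsb]
  calc ∑ y ∈ S, (a y / 2 * Real.log ((a y + b y) / a y)
          + b y / 2 * Real.log ((a y + b y) / b y))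
      ≤ ∑ _y ∈ S, ε * (3 + 2 * Real.log ε⁻¹) := by
        refine Finset.sum_le_sum fun y hy => ?_
        exact gap_point_le (ha0 y hy) (ha1 y hy) (hb0 y hy) (hb1 y hy) hε0 hε1
          (hmin y hy)
    _ = (S.card : ℝ) * (ε * (3 + 2 * Real.log ε⁻¹)) := by
        rw [Finset.sum_const, nsmul_eq_mul]

end GAP
/-! ### Section D : 1D ADC channel lemmas -/

section CHANNEL

variable {k : ℕ} {q : ℕ → ℝ} {t : ℝ}

lemma Qb_zero : Qb k q t 0 = 1 := by simp [Qb]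

lemma Qb_k (hk : 2 ≤ k) : Qb k q t k = 0 := by
  have : k ≠ 0 := by omega
  simp [Qb, this]

lemma Qb_mid {l : ℕ} (h0 : l ≠ 0) (hk : l ≠ k) : Qb k q t l = gaussQ (q l - t) := by
  simp [Qb, h0, hk]

lemma Qb_nonneg (l : ℕ) : 0 ≤ Qb k q t l := by
  unfold Qb
  split_ifs
  · norm_num
  · norm_num
  · exact (gaussQ_pos _).le

lemma Qb_le_one (l : ℕ) : Qb k q t l ≤ 1 := by
  unfold Qb
  split_ifs
  · norm_num
  · norm_num
  · exact gaussQ_le_one _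

lemma adcP_sum (hk : 2 ≤ k) : ∑ l ∈ Finset.Icc 1 k, adcP k q t l = 1 := by
  unfold adcP
  rw [← Finset.Ico_add_one_right_eq_Icc, Finset.sum_Ico_eq_sum_range]
  have h1 : ∀ i ∈ Finset.range (k + 1 - 1), Qb k q t (1 + i - 1) - Qb k q t (1 + i)
      = Qb k q t i - Qb k q t (i + 1) := by
    intro i _
    congr 1
    · congr 1
      omega
    · congr 1
      omega
  rw [Finset.sum_congr rfl h1]
  have h2 : k + 1 - 1 = k := by omega
  rw [h2, Finset.sum_range_sub' (fun i => Qb k q t i) k, Qb_zero, Qb_k hk]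
  norm_num

lemma adcP_bot (hk : 2 ≤ k) : adcP k q t 1 = gaussQ (t - q 1) := by
  unfold adcP
  have h1 : (1:ℕ) - 1 = 0 := rfl
  rw [h1, Qb_zero, Qb_mid one_ne_zero (by omega)]
  have := gaussQ_reflect (q 1 - t)
  rw [show -(q 1 - t) = t - q 1 by ring] at this
  linarith

lemma adcP_top (hk : 2 ≤ k) : adcP k q t k = gaussQ (q (k - 1) - t) := by
  unfold adcP
  rw [Qb_k hk, Qb_mid (by omega) (by omega)]
  ring

lemma adcP_pos (hk : 2 ≤ k)
    (hq : ∀ l : ℕ, 1 ≤ l → l + 1 ≤ k - 1 → q l < q (l + 1))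
    {l : ℕ} (hl : l ∈ Finset.Icc 1 k) : 0 < adcP k q t l := by
  rw [Finset.mem_Icc] at hl
  rcases eq_or_ne l 1 with h1 | h1
  · subst h1
    rw [adcP_bot hk]
    exact gaussQ_pos _
  rcases eq_or_ne l k with h2 | h2
  · subst h2
    rw [adcP_top hk]
    exact gaussQ_pos _
  · -- middle cell : 2 ≤ l ≤ k-1
    unfold adcP
    rw [Qb_mid (by omega) (by omega), Qb_mid (by omega) h2]
    have hql : q (l - 1) < q l := by
      have h3 := hq (l - 1) (by omega) (by omega)
      have h4 : l - 1 + 1 = l := by omega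
      rwa [h4] at h3
    have := gaussQ_strict_anti (show q (l - 1) - t < q l - t by linarith)
    linarith

lemma adcP_le_one (hk : 2 ≤ k)
    (hq : ∀ l : ℕ, 1 ≤ l → l + 1 ≤ k - 1 → q l < q (l + 1))
    {l : ℕ} (hl : l ∈ Finset.Icc 1 k) : adcP k q t l ≤ 1 := by
  have h1 := Finset.single_le_sum (f := fun l => adcP k q t l)
    (fun i hi => (adcP_pos hk hq hi).le) hl
  rw [adcP_sum hk] at h1
  exact h1

lemma adcP_le_Qb_pred {l : ℕ} : adcP k q t l ≤ Qb k q t (l - 1) := by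
  unfold adcP
  linarith [Qb_nonneg (k := k) (q := q) (t := t) l]

variable {M : ℝ}

/-- per-cell separation bound for antipodal inputs. -/
lemma adcP_min_le (hk : 2 ≤ k) (hM : ∀ l ∈ Finset.Icc 1 (k - 1), |q l| ≤ M)
    {X t₁ t₂ : ℝ} (h1 : X ≤ t₁) (h2 : t₂ ≤ -X)
    {l : ℕ} (hl : l ∈ Finset.Icc 1 k) :
    min (adcP k q t₁ l) (adcP k q t₂ l) ≤ gaussQ (X - M) := by
  rw [Finset.mem_Icc] at hl
  rcases eq_or_ne l 1 with h | h
  · subst h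
    refine le_trans (min_le_left _ _) ?_
    rw [adcP_bot hk]
    refine gaussQ_anti ?_
    have hq1 : |q 1| ≤ M := hM 1 (Finset.mem_Icc.2 (by omega))
    have := abs_le.1 hq1
    linarith
  · refine le_trans (min_le_right _ _) ?_
    refine le_trans adcP_le_Qb_pred ?_
    rw [Qb_mid (by omega) (by omega)]
    refine gaussQ_anti ?_
    have hql : |q (l - 1)| ≤ M := hM (l - 1) (Finset.mem_Icc.2 (by omega))
    have := abs_le.1 hql
    linarith

/-- top-corner mass lower bound. -/
lemma adcP_corner_top (hk : 2 ≤ k) (hM : ∀ l ∈ Finset.Icc 1 (k - 1), |q l| ≤ M) :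
    1 - gaussQ (t - M) ≤ adcP k q t k := by
  rw [adcP_top hk]
  have hq : |q (k - 1)| ≤ M := hM (k - 1) (Finset.mem_Icc.2 (by omega))
  have := abs_le.1 hq
  have h1 : gaussQ (M - t) ≤ gaussQ (q (k - 1) - t) := gaussQ_anti (by linarith)
  have h2 := gaussQ_reflect (t - M)
  rw [show -(t - M) = M - t by ring] at h2
  linarith

/-- bottom-corner mass lower bound. -/
lemma adcP_corner_bot (hk : 2 ≤ k) (hM : ∀ l ∈ Finset.Icc 1 (k - 1), |q l| ≤ M) :
    1 - gaussQ (-t - M) ≤ adcP k q t 1 := by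
  rw [adcP_bot hk]
  have hq : |q 1| ≤ M := hM 1 (Finset.mem_Icc.2 (by omega))
  have := abs_le.1 hq
  have h1 : gaussQ (M + t) ≤ gaussQ (t - q 1) := gaussQ_anti (by linarith)
  have h2 := gaussQ_reflect (-t - M)
  rw [show -(-t - M) = M + t by ring] at h2
  linarith

/-- bottom-cell leak lower bound. -/
lemma adcP_leak_bot (hk : 2 ≤ k) (hM : ∀ l ∈ Finset.Icc 1 (k - 1), |q l| ≤ M) :
    gaussQ (t + M) ≤ adcP k q t 1 := by
  rw [adcP_bot hk]
  have hq : |q 1| ≤ M := hM 1 (Finset.mem_Icc.2 (by omega))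
  have := abs_le.1 hq
  exact gaussQ_anti (by linarith)

/-- top-cell leak lower bound. -/
lemma adcP_leak_top (hk : 2 ≤ k) (hM : ∀ l ∈ Finset.Icc 1 (k - 1), |q l| ≤ M) :
    gaussQ (-t + M) ≤ adcP k q t k := by
  rw [adcP_top hk]
  have hq : |q (k - 1)| ≤ M := hM (k - 1) (Finset.mem_Icc.2 (by omega))
  have := abs_le.1 hq
  exact gaussQ_anti (by linarith)

/-- bottom-cell upper bound. -/
lemma adcP_bot_le (hk : 2 ≤ k) (hM : ∀ l ∈ Finset.Icc 1 (k - 1), |q l| ≤ M) :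
    adcP k q t 1 ≤ gaussQ (t - M) := by
  rw [adcP_bot hk]
  have hq : |q 1| ≤ M := hM 1 (Finset.mem_Icc.2 (by omega))
  have := abs_le.1 hq
  exact gaussQ_anti (by linarith)

/-- top-cell upper bound. -/
lemma adcP_top_le (hk : 2 ≤ k) (hM : ∀ l ∈ Finset.Icc 1 (k - 1), |q l| ≤ M) :
    adcP k q t k ≤ gaussQ (-t - M) := by
  rw [adcP_top hk]
  have hq : |q (k - 1)| ≤ M := hM (k - 1) (Finset.mem_Icc.2 (by omega))
  have := abs_le.1 hq
  exact gaussQ_anti (by linarith)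

end CHANNEL
/-! ### Section E : product-channel factorization -/

lemma eta_mul (x y : ℝ) : eta (x * y) = x * eta y + y * eta x := by
  rcases eq_or_ne x 0 with h | h
  · simp [eta, h]
  rcases eq_or_ne y 0 with h2 | h2
  · simp [eta, h2]
  · unfold eta; rw [Real.log_mul h h2]; ring

lemma mig_prod_right {ι ι' : Type*} (A : Finset ι) (B : Finset ι') (u v : ι → ℝ)
    (w : ι' → ℝ) (hw1 : ∑ y ∈ B, w y = 1) :
    ∑ p ∈ A ×ˢ B, (eta ((u p.1 * w p.2 + v p.1 * w p.2) / 2)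
        - eta (u p.1 * w p.2) / 2 - eta (v p.1 * w p.2) / 2)
      = mig A u v := by
  rw [Finset.sum_product, mig]
  refine Finset.sum_congr rfl fun l _ => ?_
  show ∑ y ∈ B, (eta ((u l * w y + v l * w y) / 2)
      - eta (u l * w y) / 2 - eta (v l * w y) / 2) = _
  have h1 : ∀ y ∈ B, eta ((u l * w y + v l * w y) / 2)
      - eta (u l * w y) / 2 - eta (v l * w y) / 2
      = w y * (eta ((u l + v l) / 2) - eta (u l) / 2 - eta (v l) / 2) := by
    intro y _
    rw [show (u l * w y + v l * w y) / 2 = ((u l + v l) / 2) * w y by ring,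
      eta_mul, eta_mul, eta_mul]
    ring
  rw [Finset.sum_congr rfl h1, ← Finset.sum_mul, hw1, one_mul]

lemma mig_prod_left {ι ι' : Type*} (A : Finset ι) (B : Finset ι') (u v : ι' → ℝ)
    (w : ι → ℝ) (hw1 : ∑ y ∈ A, w y = 1) :
    ∑ p ∈ A ×ˢ B, (eta ((w p.1 * u p.2 + w p.1 * v p.2) / 2)
        - eta (w p.1 * u p.2) / 2 - eta (w p.1 * v p.2) / 2)
      = mig B u v := by
  rw [Finset.sum_product]
  have h1 : ∀ l ∈ A, (∑ y ∈ B, (eta ((w l * u y + w l * v y) / 2)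
      - eta (w l * u y) / 2 - eta (w l * v y) / 2)) = w l * mig B u v := by
    intro l _
    rw [mig, Finset.mul_sum]
    refine Finset.sum_congr rfl fun y _ => ?_
    rw [show (w l * u y + w l * v y) / 2 = ((u y + v y) / 2) * w l by ring,
      show w l * u y = u y * w l by ring, show w l * v y = v y * w l by ring,
      eta_mul, eta_mul, eta_mul]
    ring
  rw [Finset.sum_congr rfl h1, ← Finset.sum_mul, hw1, one_mul]

lemma miADCC_half (w : ℂ) (kR kI : ℕ) (qR qI : ℕ → ℝ) (x₁ x₂ : ℂ) :
    miADCC w kR kI qR qI (1/2) x₁ x₂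
      = ∑ y ∈ Finset.Icc 1 kR ×ˢ Finset.Icc 1 kI,
        (eta ((pADCC w kR kI qR qI x₁ y + pADCC w kR kI qR qI x₂ y) / 2)
          - eta (pADCC w kR kI qR qI x₁ y) / 2 - eta (pADCC w kR kI qR qI x₂ y) / 2) := by
  unfold miADCC
  refine Finset.sum_congr rfl fun y _ => ?_
  rw [show (1:ℝ)/2 * pADCC w kR kI qR qI x₁ y + (1 - 1/2) * pADCC w kR kI qR qI x₂ y
    = (pADCC w kR kI qR qI x₁ y + pADCC w kR kI qR qI x₂ y) / 2 by ring]
  ring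

lemma miADCC_eq_mig2 (w : ℂ) (kR kI : ℕ) (qR qI : ℕ → ℝ) (x₁ x₂ : ℂ) :
    miADCC w kR kI qR qI (1/2) x₁ x₂
      = mig (Finset.Icc 1 kR ×ˢ Finset.Icc 1 kI)
          (pADCC w kR kI qR qI x₁) (pADCC w kR kI qR qI x₂) :=
  miADCC_half w kR kI qR qI x₁ x₂

lemma miADCC_fact_re {w : ℂ} {kR kI : ℕ} {qR qI : ℕ → ℝ} {x₁ x₂ : ℂ}
    (hkI : 2 ≤ kI) (him : (w * x₁).im = (w * x₂).im) :
    miADCC w kR kI qR qI (1/2) x₁ x₂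
      = mig (Finset.Icc 1 kR) (adcP kR qR (w * x₁).re) (adcP kR qR (w * x₂).re) := by
  rw [miADCC_half]
  unfold pADCC
  rw [him]
  exact mig_prod_right _ _ _ _ _ (adcP_sum hkI)

lemma miADCC_fact_im {w : ℂ} {kR kI : ℕ} {qR qI : ℕ → ℝ} {x₁ x₂ : ℂ}
    (hkR : 2 ≤ kR) (hre : (w * x₁).re = (w * x₂).re) :
    miADCC w kR kI qR qI (1/2) x₁ x₂
      = mig (Finset.Icc 1 kI) (adcP kI qI (w * x₁).im) (adcP kI qI (w * x₂).im) := by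
  rw [miADCC_half]
  unfold pADCC
  rw [hre]
  exact mig_prod_left _ _ _ _ _ (adcP_sum hkR)

lemma prod_corner {p1 p2 u v : ℝ} (h1 : 1 - u ≤ p1) (h2 : 1 - v ≤ p2)
    (hp1 : 0 ≤ p1) (hp2 : 0 ≤ p2) (hu : 0 ≤ u) (hv : 0 ≤ v) :
    1 - (u + v) ≤ p1 * p2 := by
  rcases le_or_gt (1 - u) 0 with h | h
  · nlinarith
  rcases le_or_gt (1 - v) 0 with h' | h'
  · nlinarith
  · nlinarith [mul_le_mul h1 h2 (by linarith) hp1]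
/-! ### Section F0 : asymptotic comparison machinery -/

lemma quad_atTop {a b c : ℝ} (ha : 0 < a) :
    Tendsto (fun T : ℝ => a * T ^ 2 + b * T + c) atTop atTop := by
  refine tendsto_atTop_mono' atTop ?_ (tendsto_atTop_add_const_right _ c tendsto_id)
  filter_upwards [eventually_ge_atTop ((|b| + 1) / a), eventually_ge_atTop 0] with T h1 h2
  have h3 : |b| + 1 ≤ a * T := by
    rw [div_le_iff₀ ha] at h1
    linarith
  have h4 := neg_abs_le b
  show (id T : ℝ) + c ≤ a * T ^ 2 + b * T + c
  simp only [id]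
  nlinarith

lemma tendsto_sq_mul_exp_neg_sq {δ : ℝ} (hδ : 0 < δ) :
    Tendsto (fun x : ℝ => x ^ 2 * Real.exp (-(δ * x ^ 2))) atTop (nhds 0) := by
  have h1 : Tendsto (fun y : ℝ => y ^ 1 * Real.exp (-y)) atTop (nhds 0) :=
    tendsto_pow_mul_exp_neg_atTop_nhds_zero 1
  have h2 : Tendsto (fun x : ℝ => δ * x ^ 2) atTop atTop := by
    have := quad_atTop (b := 0) (c := 0) hδ
    simpa using this
  have h3 := (h1.comp h2).const_mul δ⁻¹
  simp only [mul_zero] at h3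
  refine h3.congr fun x => ?_
  simp only [Function.comp_apply, pow_one]
  field_simp

/-- The key comparison: a polynomial times a faster-decaying Gaussian factor is
eventually smaller than a constant times a slower-decaying Gaussian factor. -/
lemma cmp_exp {a₁ a₂ b₁ b₂ c₅ c₆ c₇ : ℝ} (ha₂ : 0 < a₂) (ha : a₂ < a₁) (hc₇ : 0 < c₇) :
    ∀ᶠ T in atTop, (c₅ + c₆ * (a₁ * T + b₁) ^ 2) * Real.exp (-(a₁ * T + b₁) ^ 2 / 2)
      < c₇ * Real.exp (-(a₂ * T + b₂) ^ 2 / 2) := by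
  have ha₁ : 0 < a₁ := lt_trans ha₂ ha
  set γ : ℝ := (a₁ ^ 2 - a₂ ^ 2) / 2 with hγdef
  have hγ : 0 < γ := by
    have : a₂ ^ 2 < a₁ ^ 2 := by nlinarith
    rw [hγdef]; linarith
  set δ : ℝ := γ / (2 * a₁ ^ 2) with hδdef
  have hδ : 0 < δ := by positivity
  -- D T = s₁²/2 - s₂²/2 → ∞
  have hD : Tendsto (fun T : ℝ => (a₁ * T + b₁) ^ 2 / 2 - (a₂ * T + b₂) ^ 2 / 2)
      atTop atTop := by
    have h := quad_atTop (a := γ) (b := a₁ * b₁ - a₂ * b₂) (c := (b₁ ^ 2 - b₂ ^ 2) / 2) hγ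
    refine h.congr fun T => ?_
    rw [hγdef]; ring
  have hexpD : Tendsto (fun T : ℝ =>
      Real.exp (-((a₁ * T + b₁) ^ 2 / 2 - (a₂ * T + b₂) ^ 2 / 2))) atTop (nhds 0) :=
    Real.tendsto_exp_atBot.comp (tendsto_neg_atBot_iff.2 hD)
  -- eventually D ≥ δ s₁²
  have hDd : Tendsto (fun T : ℝ => ((a₁ * T + b₁) ^ 2 / 2 - (a₂ * T + b₂) ^ 2 / 2)
      - δ * (a₁ * T + b₁) ^ 2) atTop atTop := by
    have hlead : 0 < γ - δ * a₁ ^ 2 := by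
      rw [hδdef]
      have : γ / (2 * a₁ ^ 2) * a₁ ^ 2 = γ / 2 := by field_simp
      rw [this]; linarith
    have h := quad_atTop (a := γ - δ * a₁ ^ 2)
      (b := a₁ * b₁ - a₂ * b₂ - δ * 2 * a₁ * b₁) (c := (b₁ ^ 2 - b₂ ^ 2) / 2 - δ * b₁ ^ 2)
      hlead
    refine h.congr fun T => ?_
    rw [hγdef]; ring
  have hs₁ : Tendsto (fun T : ℝ => a₁ * T + b₁) atTop atTop :=
    tendsto_atTop_add_const_right _ b₁ (tendsto_id.const_mul_atTop ha₁)
  -- second part tends to zero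
  have hsq : Tendsto (fun T : ℝ =>
      (a₁ * T + b₁) ^ 2 * Real.exp (-((a₁ * T + b₁) ^ 2 / 2 - (a₂ * T + b₂) ^ 2 / 2)))
      atTop (nhds 0) := by
    have hbound := (tendsto_sq_mul_exp_neg_sq hδ).comp hs₁
    refine squeeze_zero' ?_ ?_ hbound
    · filter_upwards with T
      positivity
    · filter_upwards [hDd.eventually_ge_atTop 0] with T hT
      simp only [Function.comp_apply]
      refine mul_le_mul_of_nonneg_left (Real.exp_le_exp.2 (by linarith)) (by positivity)
  -- F → 0
  have hF : Tendsto (fun T : ℝ => (c₅ + c₆ * (a₁ * T + b₁) ^ 2)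
      * Real.exp (-((a₁ * T + b₁) ^ 2 / 2 - (a₂ * T + b₂) ^ 2 / 2))) atTop (nhds 0) := by
    have h := (hexpD.const_mul c₅).add (hsq.const_mul c₆)
    simp only [mul_zero, add_zero] at h
    refine h.congr fun T => ?_
    ring
  have hev := hF.eventually_lt_const hc₇
  filter_upwards [hev] with T hT
  have hmul := mul_lt_mul_of_pos_right hT (Real.exp_pos (-(a₂ * T + b₂) ^ 2 / 2))
  have hid : Real.exp (-((a₁ * T + b₁) ^ 2 / 2 - (a₂ * T + b₂) ^ 2 / 2))
      * Real.exp (-(a₂ * T + b₂) ^ 2 / 2) = Real.exp (-(a₁ * T + b₁) ^ 2 / 2) := by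
    rw [← Real.exp_add]; congr 1; ring
  calc (c₅ + c₆ * (a₁ * T + b₁) ^ 2) * Real.exp (-(a₁ * T + b₁) ^ 2 / 2)
      = (c₅ + c₆ * (a₁ * T + b₁) ^ 2)
        * (Real.exp (-((a₁ * T + b₁) ^ 2 / 2 - (a₂ * T + b₂) ^ 2 / 2))
          * Real.exp (-(a₂ * T + b₂) ^ 2 / 2)) := by rw [hid]
    _ = (c₅ + c₆ * (a₁ * T + b₁) ^ 2)
        * Real.exp (-((a₁ * T + b₁) ^ 2 / 2 - (a₂ * T + b₂) ^ 2 / 2))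
        * Real.exp (-(a₂ * T + b₂) ^ 2 / 2) := by ring
    _ < c₇ * Real.exp (-(a₂ * T + b₂) ^ 2 / 2) := hmul
/-! ### Section F1a : helpers for the 1D proposition -/

lemma mig_ge_term {ι : Type*} {S : Finset ι} {a b : ι → ℝ}
    (ha0 : ∀ y ∈ S, 0 ≤ a y) (hb0 : ∀ y ∈ S, 0 ≤ b y)
    {y₀ : ι} (hy₀ : y₀ ∈ S) :
    eta ((a y₀ + b y₀) / 2) - eta (a y₀) / 2 - eta (b y₀) / 2 ≤ mig S a b :=
  Finset.single_le_sum
    (f := fun y => eta ((a y + b y) / 2) - eta (a y) / 2 - eta (b y) / 2)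
    (fun y hy => by linarith [eta_concave2 (ha0 y hy) (hb0 y hy)]) hy₀

lemma exp_ratio_le {C κ A B : ℝ} (hκ : 0 < κ) (hC : 0 < C)
    (h : Real.log (C / κ) ≤ A - B) : C * Real.exp (-A) ≤ κ * Real.exp (-B) := by
  have h1 : C / κ ≤ Real.exp (A - B) := by
    rw [← Real.exp_log (show 0 < C / κ by positivity)]
    exact Real.exp_le_exp.2 h
  have h2 : C * Real.exp (B - A) ≤ κ := by
    rw [div_le_iff₀ hκ] at h1
    have e1 : Real.exp (B - A) * Real.exp (A - B) = 1 := by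
      rw [← Real.exp_add]; simp
    nlinarith [mul_le_mul_of_nonneg_right h1 (Real.exp_pos (B - A)).le,
      Real.exp_pos (B - A), Real.exp_pos (A - B)]
  calc C * Real.exp (-A) = C * Real.exp (B - A) * Real.exp (-B) := by
        rw [mul_assoc, ← Real.exp_add, show B - A + -B = -A by ring]
    _ ≤ κ * Real.exp (-B) := mul_le_mul_of_nonneg_right h2 (Real.exp_pos _).le

section EVE

variable {k₂ : ℕ} {q : ℕ → ℝ} {M₂ : ℝ}

/-- same-side corner for the eavesdropper. -/
lemma eve_corner (hk₂ : 2 ≤ k₂) (hM₂ : ∀ l ∈ Finset.Icc 1 (k₂ - 1), |q l| ≤ M₂)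
    {r T : ℝ} (hr : r ≠ 0) (hT : 0 ≤ T) (hs : 1 ≤ |r| * T - M₂) :
    ∃ l₀ ∈ Finset.Icc 1 k₂,
      1 - Real.exp (-(|r| * T - M₂) ^ 2 / 2) ≤ adcP k₂ q (r * (T + 2)) l₀ ∧
      1 - Real.exp (-(|r| * T - M₂) ^ 2 / 2) ≤ adcP k₂ q (r * T) l₀ := by
  have hQ : gaussQ (|r| * T - M₂) ≤ Real.exp (-(|r| * T - M₂) ^ 2 / 2) := gaussQ_le hs
  rcases lt_or_gt_of_ne hr with hneg | hpos
  · have habs : |r| = -r := abs_of_neg hneg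
    refine ⟨1, Finset.mem_Icc.2 ⟨le_refl 1, by omega⟩, ?_, ?_⟩
    · have h1 := adcP_corner_bot (t := r * (T + 2)) hk₂ hM₂
      have h2 : gaussQ (-(r * (T + 2)) - M₂) ≤ gaussQ (|r| * T - M₂) := by
        refine gaussQ_anti ?_
        rw [habs]; nlinarith
      linarith
    · have h1 := adcP_corner_bot (t := r * T) hk₂ hM₂
      have h2 : gaussQ (-(r * T) - M₂) ≤ gaussQ (|r| * T - M₂) := by
        refine gaussQ_anti ?_
        rw [habs]; nlinarith
      linarith
  · have habs : |r| = r := abs_of_pos hpos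
    refine ⟨k₂, Finset.mem_Icc.2 ⟨by omega, le_refl k₂⟩, ?_, ?_⟩
    · have h1 := adcP_corner_top (t := r * (T + 2)) hk₂ hM₂
      have h2 : gaussQ (r * (T + 2) - M₂) ≤ gaussQ (|r| * T - M₂) := by
        refine gaussQ_anti ?_
        rw [habs]; nlinarith
      linarith
    · have h1 := adcP_corner_top (t := r * T) hk₂ hM₂
      have h2 : gaussQ (r * T - M₂) ≤ gaussQ (|r| * T - M₂) := by
        refine gaussQ_anti ?_
        rw [habs]
      linarith

/-- antipodal corner structure for the eavesdropper. -/
lemma eve_anti (hk₂ : 2 ≤ k₂) (hM₂ : ∀ l ∈ Finset.Icc 1 (k₂ - 1), |q l| ≤ M₂)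
    {r T : ℝ} (hr : r ≠ 0) :
    ∃ l₀ ∈ Finset.Icc 1 k₂,
      1 - gaussQ (|r| * T - M₂) ≤ adcP k₂ q (-(r * T)) l₀ ∧
      gaussQ (|r| * T + M₂) ≤ adcP k₂ q (r * T) l₀ ∧
      adcP k₂ q (r * T) l₀ ≤ gaussQ (|r| * T - M₂) := by
  rcases lt_or_gt_of_ne hr with hneg | hpos
  · have habs : |r| = -r := abs_of_neg hneg
    refine ⟨k₂, Finset.mem_Icc.2 ⟨by omega, le_refl k₂⟩, ?_, ?_, ?_⟩
    · have h1 := adcP_corner_top (t := -(r * T)) hk₂ hM₂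
      have h2 : -(r * T) - M₂ = |r| * T - M₂ := by rw [habs]; ring
      rw [h2] at h1; exact h1
    · have h1 := adcP_leak_top (t := r * T) hk₂ hM₂
      have h2 : -(r * T) + M₂ = |r| * T + M₂ := by rw [habs]; ring
      rw [h2] at h1; exact h1
    · have h1 := adcP_top_le (t := r * T) hk₂ hM₂
      have h2 : -(r * T) - M₂ = |r| * T - M₂ := by rw [habs]; ring
      rw [h2] at h1; exact h1
  · have habs : |r| = r := abs_of_pos hpos
    refine ⟨1, Finset.mem_Icc.2 ⟨le_refl 1, by omega⟩, ?_, ?_, ?_⟩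
    · have h1 := adcP_corner_bot (t := -(r * T)) hk₂ hM₂
      have h2 : -(-(r * T)) - M₂ = |r| * T - M₂ := by rw [habs]; ring
      rw [h2] at h1; exact h1
    · have h1 := adcP_leak_bot (t := r * T) hk₂ hM₂
      have h2 : r * T + M₂ = |r| * T + M₂ := by rw [habs]
      rw [h2] at h1; exact h1
    · have h1 := adcP_bot_le (t := r * T) hk₂ hM₂
      have h2 : r * T - M₂ = |r| * T - M₂ := by rw [habs]
      rw [h2] at h1; exact h1

end EVE
/-! ### Section F1b : the 1D proposition -/

set_option maxHeartbeats 1000000 in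
lemma prop1D {k₁ : ℕ} (hk₁ : 2 ≤ k₁) {c : ℕ → ℝ}
    (hc : ∀ l : ℕ, 1 ≤ l → l + 1 ≤ k₁ - 1 → c l < c (l + 1))
    {k₂ : ℕ} (hk₂ : 2 ≤ k₂) {q : ℕ → ℝ}
    (hq : ∀ l : ℕ, 1 ≤ l → l + 1 ≤ k₂ - 1 → q l < q (l + 1))
    {r : ℝ} (hr0 : r ≠ 0) (hr1 : |r| ≠ 1) :
    ∃ t₁ t₂ : ℝ,
      mig (Finset.Icc 1 k₂) (adcP k₂ q (r * t₁)) (adcP k₂ q (r * t₂))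
        < mig (Finset.Icc 1 k₁) (adcP k₁ c t₁) (adcP k₁ c t₂) := by
  classical
  have habs : 0 < |r| := abs_pos.2 hr0
  have hne₂ : (Finset.Icc 1 (k₂ - 1)).Nonempty :=
    ⟨1, Finset.mem_Icc.2 ⟨le_refl 1, by omega⟩⟩
  set M₂ : ℝ := (Finset.Icc 1 (k₂ - 1)).sup' hne₂ (fun l => |q l|) with hM₂def
  have hM₂ : ∀ l ∈ Finset.Icc 1 (k₂ - 1), |q l| ≤ M₂ := fun l hl => by
    rw [hM₂def]; exact Finset.le_sup' (fun l => |q l|) hl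
  have hM₂0 : 0 ≤ M₂ :=
    le_trans (abs_nonneg (q 1)) (hM₂ 1 (Finset.mem_Icc.2 ⟨le_refl 1, by omega⟩))
  have hne₁ : (Finset.Icc 1 (k₁ - 1)).Nonempty :=
    ⟨1, Finset.mem_Icc.2 ⟨le_refl 1, by omega⟩⟩
  set M₁ : ℝ := (Finset.Icc 1 (k₁ - 1)).sup' hne₁ (fun l => |c l|) with hM₁def
  have hM₁ : ∀ l ∈ Finset.Icc 1 (k₁ - 1), |c l| ≤ M₁ := fun l hl => by
    rw [hM₁def]; exact Finset.le_sup' (fun l => |c l|) hl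
  have hM₁0 : 0 ≤ M₁ :=
    le_trans (abs_nonneg (c 1)) (hM₁ 1 (Finset.mem_Icc.2 ⟨le_refl 1, by omega⟩))
  set κ : ℝ := (Real.sqrt (2 * Real.pi))⁻¹ with hκdef
  have hκ : 0 < κ := kappa_pos
  have hcard₂ : (Finset.Icc 1 k₂).card = k₂ := by rw [Nat.card_Icc]; omega
  have hcard₁ : (Finset.Icc 1 k₁).card = k₁ := by rw [Nat.card_Icc]; omega
  have hmem₁ : (1 : ℕ) ∈ Finset.Icc 1 k₁ := Finset.mem_Icc.2 ⟨le_refl 1, by omega⟩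
  rcases lt_or_gt_of_ne hr1 with hlt | hgt
  · -- |r| < 1 : antipodal inputs T, -T
    have hlin₂ : Tendsto (fun T : ℝ => |r| * T - M₂) atTop atTop :=
      tendsto_atTop_add_const_right _ (-M₂) (tendsto_id.const_mul_atTop habs)
    have hev : ∀ᶠ T in atTop,
        mig (Finset.Icc 1 k₂) (adcP k₂ q (r * T)) (adcP k₂ q (r * -T))
          < mig (Finset.Icc 1 k₁) (adcP k₁ c T) (adcP k₁ c (-T)) := by
      filter_upwards [eventually_ge_atTop (0:ℝ),
        eventually_ge_atTop (M₁ + 2),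
        hlin₂.eventually_ge_atTop 2,
        cmp_exp (a₁ := 1) (b₁ := -M₁) (a₂ := |r|) (b₂ := M₂ + 1)
          (c₅ := 3 * k₁) (c₆ := k₁) (c₇ := κ / 4) habs hlt (by positivity)]
        with T hT0 hT1 hs2 hcmp
      have hrT : r * -T = -(r * T) := by ring
      rw [hrT]
      -- legit gap upper bound
      set ε₁ : ℝ := Real.exp (-(T - M₁) ^ 2 / 2) with hε₁def
      have hε₁0 : 0 < ε₁ := Real.exp_pos _
      have hε₁h : ε₁ ≤ 1 / 2 := by
        rw [hε₁def]
        have h3 : (2:ℝ) + 1 ≤ Real.exp 2 := by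
          have := Real.add_one_le_exp (2:ℝ); linarith
        have h4 : Real.exp (-(T - M₁) ^ 2 / 2) ≤ Real.exp (-2) := by
          refine Real.exp_le_exp.2 ?_
          nlinarith
        have h5 : Real.exp (-2) ≤ 1 / 2 := by
          rw [Real.exp_neg]
          rw [inv_le_comm₀ (Real.exp_pos 2) (by norm_num)]
          linarith
        linarith
      have hmin : ∀ y ∈ Finset.Icc 1 k₁,
          min (adcP k₁ c T y) (adcP k₁ c (-T) y) ≤ ε₁ := by
        intro y hy
        refine le_trans (adcP_min_le hk₁ hM₁ (le_refl T) (le_refl (-T)) hy) ?_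
        rw [hε₁def]
        exact gaussQ_le (by linarith)
      have hgap₁ := gap_le (fun y hy => adcP_pos hk₁ hc hy)
        (fun y hy => adcP_le_one hk₁ hc hy)
        (fun y hy => adcP_pos hk₁ hc hy)
        (fun y hy => adcP_le_one hk₁ hc hy)
        (adcP_sum hk₁) (adcP_sum hk₁) hε₁0 hε₁h hmin
      rw [hcard₁] at hgap₁
      have hlog₁ : Real.log ε₁⁻¹ = (T - M₁) ^ 2 / 2 := by
        rw [hε₁def, ← Real.exp_neg, Real.log_exp]; ring
      rw [hlog₁] at hgap₁
      -- eve gap lower bound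
      obtain ⟨l₀, hl₀, hbmass, halow, hahigh⟩ := eve_anti (T := T) hk₂ hM₂ hr0
      have hQs : gaussQ (|r| * T - M₂) ≤ 1 / 2 := by
        have h4 : gaussQ (|r| * T - M₂) ≤ Real.exp (-(|r| * T - M₂) ^ 2 / 2) :=
          gaussQ_le (by linarith)
        have h3 : (2:ℝ) + 1 ≤ Real.exp 2 := by
          have := Real.add_one_le_exp (2:ℝ); linarith
        have h6 : Real.exp (-(|r| * T - M₂) ^ 2 / 2) ≤ Real.exp (-2) := by
          refine Real.exp_le_exp.2 ?_
          nlinarith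
        have h5 : Real.exp (-2) ≤ 1 / 2 := by
          rw [Real.exp_neg]
          rw [inv_le_comm₀ (Real.exp_pos 2) (by norm_num)]
          linarith
        linarith
      have hable : adcP k₂ q (r * T) l₀ ≤ adcP k₂ q (-(r * T)) l₀ := by
        calc adcP k₂ q (r * T) l₀ ≤ gaussQ (|r| * T - M₂) := hahigh
          _ ≤ 1 - gaussQ (|r| * T - M₂) := by linarith
          _ ≤ adcP k₂ q (-(r * T)) l₀ := hbmass
      have hgap₂ := gap_ge (fun y hy => adcP_pos hk₂ hq hy)
        (fun y hy => adcP_pos hk₂ hq hy)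
        (adcP_sum hk₂) (adcP_sum hk₂) hl₀ hable
      have halow₂ : κ / 4 * Real.exp (-(|r| * T + (M₂ + 1)) ^ 2 / 2)
          ≤ adcP k₂ q (r * T) l₀ / 4 := by
        have h7 : κ * Real.exp (-(|r| * T + M₂ + 1) ^ 2 / 2) ≤ gaussQ (|r| * T + M₂) :=
          gaussQ_ge (by positivity)
        have h8 : (|r| * T + (M₂ + 1)) = (|r| * T + M₂ + 1) := by ring
        rw [h8]
        linarith [halow]
      -- combine
      have hchain : (3 * (k₁:ℝ) + (k₁:ℝ) * (1 * T + -M₁) ^ 2)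
          * Real.exp (-(1 * T + -M₁) ^ 2 / 2)
          < κ / 4 * Real.exp (-(|r| * T + (M₂ + 1)) ^ 2 / 2) := hcmp
      have heq1 : (1 * T + -M₁) = T - M₁ := by ring
      rw [heq1] at hchain
      have hgap₁' : Real.log 2 - mig (Finset.Icc 1 k₁) (adcP k₁ c T) (adcP k₁ c (-T))
          ≤ (3 * (k₁:ℝ) + (k₁:ℝ) * (T - M₁) ^ 2) * Real.exp (-(T - M₁) ^ 2 / 2) := by
        calc Real.log 2 - mig (Finset.Icc 1 k₁) (adcP k₁ c T) (adcP k₁ c (-T))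
            ≤ (k₁:ℝ) * (ε₁ * (3 + 2 * ((T - M₁) ^ 2 / 2))) := hgap₁
          _ = (3 * (k₁:ℝ) + (k₁:ℝ) * (T - M₁) ^ 2) * ε₁ := by ring
          _ = _ := by rw [hε₁def]
      linarith [hgap₂, hgap₁', hchain, halow₂]
    obtain ⟨T, hT⟩ := hev.exists
    exact ⟨T, -T, hT⟩
  · -- |r| > 1 : same-side inputs T+2, T
    have hlin₂ : Tendsto (fun T : ℝ => |r| * T - M₂) atTop atTop :=
      tendsto_atTop_add_const_right _ (-M₂) (tendsto_id.const_mul_atTop habs)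
    have hev : ∀ᶠ T in atTop,
        mig (Finset.Icc 1 k₂) (adcP k₂ q (r * (T + 2))) (adcP k₂ q (r * T))
          < mig (Finset.Icc 1 k₁) (adcP k₁ c (T + 2)) (adcP k₁ c T) := by
      filter_upwards [eventually_ge_atTop (0:ℝ),
        hlin₂.eventually_ge_atTop 1,
        eventually_ge_atTop (c 1 - 1),
        eventually_ge_atTop (c 1),
        eventually_ge_atTop (c 1 - 3/2 + Real.log (36 / κ)),
        cmp_exp (a₁ := |r|) (b₁ := -M₂) (a₂ := 1) (b₂ := 1 - c 1)
          (c₅ := 2 * k₂ + 1) (c₆ := 1) (c₇ := κ / 16) one_pos hgt (by positivity)]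
        with T hT0 hs hT1 hT2 hT3 hcmp
      set s : ℝ := |r| * T - M₂ with hsdef
      set ε : ℝ := Real.exp (-s ^ 2 / 2) with hεdef
      have hε0 : 0 < ε := Real.exp_pos _
      have hε1 : ε ≤ 1 := by
        rw [hεdef, Real.exp_le_one_iff]
        nlinarith
      obtain ⟨l₀, hl₀, hmass1, hmass2⟩ := eve_corner hk₂ hM₂ hr0 hT0 hs
      have heve_le := mig_le_corner (fun y hy => (adcP_pos hk₂ hq hy).le)
        (fun y hy => adcP_le_one hk₂ hq hy)
        (fun y hy => (adcP_pos hk₂ hq hy).le)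
        (fun y hy => adcP_le_one hk₂ hq hy)
        (adcP_sum hk₂) (adcP_sum hk₂) hl₀ hε0 hε1 hmass1 hmass2
      rw [hcard₂] at heve_le
      have hlog : Real.log ε⁻¹ = s ^ 2 / 2 := by
        rw [hεdef, ← Real.exp_neg, Real.log_exp]; ring
      rw [hlog] at heve_le
      -- legit lower bound
      have hb : κ * Real.exp (-(T - c 1 + 1) ^ 2 / 2) ≤ adcP k₁ c T 1 := by
        rw [adcP_bot hk₁]
        exact gaussQ_ge (by linarith)
      have ha_le : adcP k₁ c (T + 2) 1 ≤ Real.exp (-(T + 2 - c 1) ^ 2 / 2) := by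
        rw [adcP_bot hk₁]
        exact gaussQ_le (by linarith)
      have haa : 0 < adcP k₁ c (T + 2) 1 := adcP_pos hk₁ hc hmem₁
      have hratio : 36 * adcP k₁ c (T + 2) 1 ≤ adcP k₁ c T 1 := by
        have h36 : 36 * Real.exp (-((T + 2 - c 1) ^ 2 / 2))
            ≤ κ * Real.exp (-((T - c 1 + 1) ^ 2 / 2)) := by
          refine exp_ratio_le hκ (by norm_num) ?_
          have hexpand : (T + 2 - c 1) ^ 2 / 2 - (T - c 1 + 1) ^ 2 / 2
              = T - c 1 + 3 / 2 := by ring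
          rw [hexpand]
          linarith
        have h37 : 36 * adcP k₁ c (T + 2) 1 ≤ 36 * Real.exp (-(T + 2 - c 1) ^ 2 / 2) := by
          linarith
        have h38 : -((T + 2 - c 1) ^ 2 / 2) = -(T + 2 - c 1) ^ 2 / 2 := by ring
        have h39 : -((T - c 1 + 1) ^ 2 / 2) = -(T - c 1 + 1) ^ 2 / 2 := by ring
        rw [h38, h39] at h36
        linarith
      have hgain := eta_gain haa hratio
      have hterm := mig_ge_term (a := adcP k₁ c (T + 2)) (b := adcP k₁ c T)
        (fun y hy => (adcP_pos hk₁ hc hy).le)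
        (fun y hy => (adcP_pos hk₁ hc hy).le) hmem₁
      calc mig (Finset.Icc 1 k₂) (adcP k₂ q (r * (T + 2))) (adcP k₂ q (r * T))
          ≤ (2 * (k₂:ℝ) + 1) * ε + 2 * ε * (s ^ 2 / 2) := heve_le
        _ = ((2 * (k₂:ℝ) + 1) + 1 * (|r| * T + -M₂) ^ 2)
            * Real.exp (-(|r| * T + -M₂) ^ 2 / 2) := by
            rw [hεdef, hsdef]; ring_nf
        _ < κ / 16 * Real.exp (-(1 * T + (1 - c 1)) ^ 2 / 2) := hcmp
        _ ≤ adcP k₁ c T 1 / 16 := by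
            have h9 : (1 * T + (1 - c 1)) = (T - c 1 + 1) := by ring
            rw [h9]
            linarith
        _ ≤ eta ((adcP k₁ c (T + 2) 1 + adcP k₁ c T 1) / 2)
            - eta (adcP k₁ c (T + 2) 1) / 2 - eta (adcP k₁ c T 1) / 2 := by
            linarith
        _ ≤ mig (Finset.Icc 1 k₁) (adcP k₁ c (T + 2)) (adcP k₁ c T) := hterm
    obtain ⟨T, hT⟩ := hev.exists
    exact ⟨T + 2, T, hT⟩
/-! ### Section F2a : helpers for the 2D non-aligned case -/

section TWOD

variable {k : ℕ} {q : ℕ → ℝ} {M : ℝ}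

/-- common-corner lemma for two same-side inputs. -/
lemma corner_two (hk : 2 ≤ k) (hM : ∀ l ∈ Finset.Icc 1 (k - 1), |q l| ≤ M)
    {u v X : ℝ}
    (huv : (X ≤ u ∧ X ≤ v) ∨ (u ≤ -X ∧ v ≤ -X)) :
    ∃ l₀ ∈ Finset.Icc 1 k,
      1 - gaussQ (X - M) ≤ adcP k q u l₀ ∧ 1 - gaussQ (X - M) ≤ adcP k q v l₀ := by
  rcases huv with ⟨hu, hv⟩ | ⟨hu, hv⟩
  · refine ⟨k, Finset.mem_Icc.2 ⟨by omega, le_refl k⟩, ?_, ?_⟩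
    · have h1 := adcP_corner_top (t := u) hk hM
      have h2 : gaussQ (u - M) ≤ gaussQ (X - M) := gaussQ_anti (by linarith)
      linarith
    · have h1 := adcP_corner_top (t := v) hk hM
      have h2 : gaussQ (v - M) ≤ gaussQ (X - M) := gaussQ_anti (by linarith)
      linarith
  · refine ⟨1, Finset.mem_Icc.2 ⟨le_refl 1, by omega⟩, ?_, ?_⟩
    · have h1 := adcP_corner_bot (t := u) hk hM
      have h2 : gaussQ (-u - M) ≤ gaussQ (X - M) := gaussQ_anti (by linarith)
      linarith
    · have h1 := adcP_corner_bot (t := v) hk hM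
      have h2 : gaussQ (-v - M) ≤ gaussQ (X - M) := gaussQ_anti (by linarith)
      linarith

end TWOD

lemma pADCC_sum {w : ℂ} {kR kI : ℕ} {qR qI : ℕ → ℝ} (hkR : 2 ≤ kR) (hkI : 2 ≤ kI)
    (x : ℂ) :
    ∑ y ∈ Finset.Icc 1 kR ×ˢ Finset.Icc 1 kI, pADCC w kR kI qR qI x y = 1 := by
  unfold pADCC
  rw [Finset.sum_product]
  have h1 : ∀ l ∈ Finset.Icc 1 kR,
      (∑ y ∈ Finset.Icc 1 kI, adcP kR qR (w * x).re l * adcP kI qI (w * x).im y)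
      = adcP kR qR (w * x).re l := by
    intro l _
    rw [← Finset.mul_sum, adcP_sum hkI, mul_one]
  rw [Finset.sum_congr rfl h1, adcP_sum hkR]

lemma pADCC_pos {w : ℂ} {kR kI : ℕ} {qR qI : ℕ → ℝ} (hkR : 2 ≤ kR) (hkI : 2 ≤ kI)
    (hqR : ∀ l : ℕ, 1 ≤ l → l + 1 ≤ kR - 1 → qR l < qR (l + 1))
    (hqI : ∀ l : ℕ, 1 ≤ l → l + 1 ≤ kI - 1 → qI l < qI (l + 1))
    (x : ℂ) {y : ℕ × ℕ} (hy : y ∈ Finset.Icc 1 kR ×ˢ Finset.Icc 1 kI) :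
    0 < pADCC w kR kI qR qI x y := by
  rw [Finset.mem_product] at hy
  exact mul_pos (adcP_pos hkR hqR hy.1) (adcP_pos hkI hqI hy.2)

lemma pADCC_le_one {w : ℂ} {kR kI : ℕ} {qR qI : ℕ → ℝ} (hkR : 2 ≤ kR) (hkI : 2 ≤ kI)
    (hqR : ∀ l : ℕ, 1 ≤ l → l + 1 ≤ kR - 1 → qR l < qR (l + 1))
    (hqI : ∀ l : ℕ, 1 ≤ l → l + 1 ≤ kI - 1 → qI l < qI (l + 1))
    (x : ℂ) {y : ℕ × ℕ} (hy : y ∈ Finset.Icc 1 kR ×ˢ Finset.Icc 1 kI) :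
    pADCC w kR kI qR qI x y ≤ 1 := by
  rw [Finset.mem_product] at hy
  unfold pADCC
  have h1 := adcP_pos (t := (w * x).re) hkR hqR hy.1
  have h2 := adcP_pos (t := (w * x).im) hkI hqI hy.2
  have h3 := adcP_le_one (t := (w * x).re) hkR hqR hy.1
  have h4 := adcP_le_one (t := (w * x).im) hkI hqI hy.2
  nlinarith
/-! ### Section F2b : the non-aligned 2D case -/

set_option maxHeartbeats 1000000 in
lemma mig2D_small {k₂R k₂I : ℕ} (hk₂R : 2 ≤ k₂R) (hk₂I : 2 ≤ k₂I)
    {qR qI : ℕ → ℝ}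
    (hqR : ∀ l : ℕ, 1 ≤ l → l + 1 ≤ k₂R - 1 → qR l < qR (l + 1))
    (hqI : ∀ l : ℕ, 1 ≤ l → l + 1 ≤ k₂I - 1 → qI l < qI (l + 1))
    {gm C : ℝ} (hgm : 0 < gm)
    (u₁ u₂ v₁ v₂ : ℝ → ℝ)
    (hsu : ∀ T, 0 ≤ T → (gm * T - C ≤ u₁ T ∧ gm * T - C ≤ u₂ T)
      ∨ (u₁ T ≤ -(gm * T - C) ∧ u₂ T ≤ -(gm * T - C)))
    (hsv : ∀ T, 0 ≤ T → (gm * T - C ≤ v₁ T ∧ gm * T - C ≤ v₂ T)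
      ∨ (v₁ T ≤ -(gm * T - C) ∧ v₂ T ≤ -(gm * T - C)))
    {L : ℝ} (hL : 0 < L) :
    ∀ᶠ T in atTop,
      mig (Finset.Icc 1 k₂R ×ˢ Finset.Icc 1 k₂I)
        (fun y => adcP k₂R qR (u₁ T) y.1 * adcP k₂I qI (v₁ T) y.2)
        (fun y => adcP k₂R qR (u₂ T) y.1 * adcP k₂I qI (v₂ T) y.2) < L := by
  classical
  have hneR : (Finset.Icc 1 (k₂R - 1)).Nonempty :=
    ⟨1, Finset.mem_Icc.2 ⟨le_refl 1, by omega⟩⟩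
  set MR : ℝ := (Finset.Icc 1 (k₂R - 1)).sup' hneR (fun l => |qR l|) with hMRdef
  have hMR : ∀ l ∈ Finset.Icc 1 (k₂R - 1), |qR l| ≤ MR := fun l hl => by
    rw [hMRdef]; exact Finset.le_sup' (fun l => |qR l|) hl
  have hneI : (Finset.Icc 1 (k₂I - 1)).Nonempty :=
    ⟨1, Finset.mem_Icc.2 ⟨le_refl 1, by omega⟩⟩
  set MI : ℝ := (Finset.Icc 1 (k₂I - 1)).sup' hneI (fun l => |qI l|) with hMIdef
  have hMI : ∀ l ∈ Finset.Icc 1 (k₂I - 1), |qI l| ≤ MI := fun l hl => by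
    rw [hMIdef]; exact Finset.le_sup' (fun l => |qI l|) hl
  set CC : ℝ := C + max MR MI with hCCdef
  have hlin : Tendsto (fun T : ℝ => gm * T - CC) atTop atTop :=
    tendsto_atTop_add_const_right _ (-CC) (tendsto_id.const_mul_atTop hgm)
  have hcard : ((Finset.Icc 1 k₂R ×ˢ Finset.Icc 1 k₂I).card : ℝ) = (k₂R * k₂I : ℕ) := by
    rw [Finset.card_product, Nat.card_Icc, Nat.card_Icc]
    congr 1
    all_goals omega
  filter_upwards [eventually_ge_atTop (0:ℝ), hlin.eventually_ge_atTop 2,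
    cmp_exp (a₁ := gm) (b₁ := -CC) (a₂ := gm / 2) (b₂ := 0)
      (c₅ := 4 * (k₂R * k₂I : ℕ) + 2) (c₆ := 2) (c₇ := L)
      (half_pos hgm) (by linarith) hL] with T hT0 hs2 hcmp
  set X : ℝ := gm * T - C with hXdef
  set s : ℝ := gm * T - CC with hsdef
  have hsX : s ≤ X - MR ∧ s ≤ X - MI := by
    constructor
    · rw [hsdef, hXdef, hCCdef]
      have := le_max_left MR MI
      linarith
    · rw [hsdef, hXdef, hCCdef]
      have := le_max_right MR MI
      linarith
  obtain ⟨lR, hlR, hmR1, hmR2⟩ := corner_two hk₂R hMR (hsu T hT0)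
  obtain ⟨lI, hlI, hmI1, hmI2⟩ := corner_two hk₂I hMI (hsv T hT0)
  have hQR : gaussQ (X - MR) ≤ Real.exp (-s ^ 2 / 2) :=
    le_trans (gaussQ_anti hsX.1) (gaussQ_le (by linarith))
  have hQI : gaussQ (X - MI) ≤ Real.exp (-s ^ 2 / 2) :=
    le_trans (gaussQ_anti hsX.2) (gaussQ_le (by linarith))
  set ε : ℝ := 2 * Real.exp (-s ^ 2 / 2) with hεdef
  have hε0 : 0 < ε := by positivity
  have hexp2 : Real.exp (-s ^ 2 / 2) ≤ Real.exp (-2) := by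
    refine Real.exp_le_exp.2 ?_
    nlinarith
  have hexphalf : Real.exp (-2:ℝ) ≤ 1 / 2 := by
    rw [Real.exp_neg]
    rw [inv_le_comm₀ (Real.exp_pos 2) (by norm_num)]
    have := Real.add_one_le_exp (2:ℝ)
    linarith
  have hε1 : ε ≤ 1 := by rw [hεdef]; linarith
  -- corner membership and masses
  have hy₀ : (lR, lI) ∈ Finset.Icc 1 k₂R ×ˢ Finset.Icc 1 k₂I :=
    Finset.mem_product.2 ⟨hlR, hlI⟩
  have hmass1 : 1 - ε ≤ adcP k₂R qR (u₁ T) lR * adcP k₂I qI (v₁ T) lI := by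
    have h1 : 1 - Real.exp (-s ^ 2 / 2) ≤ adcP k₂R qR (u₁ T) lR := by linarith
    have h2 : 1 - Real.exp (-s ^ 2 / 2) ≤ adcP k₂I qI (v₁ T) lI := by linarith
    have h3 := prod_corner h1 h2 (adcP_pos hk₂R hqR hlR).le (adcP_pos hk₂I hqI hlI).le
      (Real.exp_pos _).le (Real.exp_pos _).le
    rw [hεdef]
    linarith
  have hmass2 : 1 - ε ≤ adcP k₂R qR (u₂ T) lR * adcP k₂I qI (v₂ T) lI := by
    have h1 : 1 - Real.exp (-s ^ 2 / 2) ≤ adcP k₂R qR (u₂ T) lR := by linarith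
    have h2 : 1 - Real.exp (-s ^ 2 / 2) ≤ adcP k₂I qI (v₂ T) lI := by linarith
    have h3 := prod_corner h1 h2 (adcP_pos hk₂R hqR hlR).le (adcP_pos hk₂I hqI hlI).le
      (Real.exp_pos _).le (Real.exp_pos _).le
    rw [hεdef]
    linarith
  -- distribution facts
  have hsum : ∀ t₁ t₂ : ℝ, ∑ y ∈ Finset.Icc 1 k₂R ×ˢ Finset.Icc 1 k₂I,
      adcP k₂R qR t₁ y.1 * adcP k₂I qI t₂ y.2 = 1 := by
    intro t₁ t₂
    rw [Finset.sum_product]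
    have h1 : ∀ l ∈ Finset.Icc 1 k₂R,
        (∑ y ∈ Finset.Icc 1 k₂I, adcP k₂R qR t₁ l * adcP k₂I qI t₂ y)
        = adcP k₂R qR t₁ l := by
      intro l _
      rw [← Finset.mul_sum, adcP_sum hk₂I, mul_one]
    rw [Finset.sum_congr rfl h1, adcP_sum hk₂R]
  have hpos : ∀ t₁ t₂ : ℝ, ∀ y ∈ Finset.Icc 1 k₂R ×ˢ Finset.Icc 1 k₂I,
      0 ≤ adcP k₂R qR t₁ y.1 * adcP k₂I qI t₂ y.2 := by
    intro t₁ t₂ y hy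
    rw [Finset.mem_product] at hy
    exact (mul_pos (adcP_pos hk₂R hqR hy.1) (adcP_pos hk₂I hqI hy.2)).le
  have hle1 : ∀ t₁ t₂ : ℝ, ∀ y ∈ Finset.Icc 1 k₂R ×ˢ Finset.Icc 1 k₂I,
      adcP k₂R qR t₁ y.1 * adcP k₂I qI t₂ y.2 ≤ 1 := by
    intro t₁ t₂ y hy
    rw [Finset.mem_product] at hy
    have h1 := adcP_pos (t := t₁) hk₂R hqR hy.1
    have h2 := adcP_pos (t := t₂) hk₂I hqI hy.2
    have h3 := adcP_le_one (t := t₁) hk₂R hqR hy.1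
    have h4 := adcP_le_one (t := t₂) hk₂I hqI hy.2
    nlinarith
  have hmig := mig_le_corner (hpos (u₁ T) (v₁ T)) (hle1 (u₁ T) (v₁ T))
    (hpos (u₂ T) (v₂ T)) (hle1 (u₂ T) (v₂ T))
    (hsum (u₁ T) (v₁ T)) (hsum (u₂ T) (v₂ T)) hy₀ hε0 hε1 hmass1 hmass2
  rw [hcard] at hmig
  -- bound the log term
  have hlogε : Real.log ε⁻¹ ≤ s ^ 2 / 2 := by
    rw [hεdef, mul_inv, Real.log_mul (by norm_num) (by positivity),
      ← Real.exp_neg, Real.log_exp]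
    have h5 : Real.log (2:ℝ)⁻¹ ≤ 0 := by
      rw [Real.log_inv]
      have := Real.log_pos (show (1:ℝ) < 2 by norm_num)
      linarith
    linarith
  have hlogε0 : 0 ≤ Real.log ε⁻¹ := by
    rw [Real.log_inv]
    have := Real.log_nonpos hε0.le hε1
    linarith
  have hfinal : mig (Finset.Icc 1 k₂R ×ˢ Finset.Icc 1 k₂I)
      (fun y => adcP k₂R qR (u₁ T) y.1 * adcP k₂I qI (v₁ T) y.2)
      (fun y => adcP k₂R qR (u₂ T) y.1 * adcP k₂I qI (v₂ T) y.2)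
      ≤ ((4 * (k₂R * k₂I : ℕ) + 2) + 2 * (gm * T + -CC) ^ 2)
        * Real.exp (-(gm * T + -CC) ^ 2 / 2) := by
    have h6 : (2 * ((k₂R * k₂I : ℕ) : ℝ) + 1) * ε + 2 * ε * Real.log ε⁻¹
        ≤ (2 * ((k₂R * k₂I : ℕ) : ℝ) + 1) * ε + ε * s ^ 2 := by
      nlinarith
    have h7 : (2 * ((k₂R * k₂I : ℕ) : ℝ) + 1) * ε + ε * s ^ 2
        = ((4 * (k₂R * k₂I : ℕ) + 2) + 2 * (gm * T + -CC) ^ 2)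
          * Real.exp (-(gm * T + -CC) ^ 2 / 2) := by
      rw [hεdef, hsdef]
      push_cast
      ring_nf
    calc mig _ _ _ ≤ (2 * ((k₂R * k₂I : ℕ) : ℝ) + 1) * ε + 2 * ε * Real.log ε⁻¹ := hmig
      _ ≤ (2 * ((k₂R * k₂I : ℕ) : ℝ) + 1) * ε + ε * s ^ 2 := h6
      _ = _ := h7
  have hlast : L * Real.exp (-(gm / 2 * T + 0) ^ 2 / 2) ≤ L := by
    have h8 : Real.exp (-(gm / 2 * T + 0) ^ 2 / 2) ≤ 1 := by
      rw [Real.exp_le_one_iff]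
      nlinarith [sq_nonneg (gm / 2 * T + 0)]
    nlinarith
  calc mig _ _ _ ≤ _ := hfinal
    _ < L * Real.exp (-(gm / 2 * T + 0) ^ 2 / 2) := hcmp
    _ ≤ L := hlast
/-! ### Main theorem -/

set_option maxHeartbeats 1000000

/-- Corollary 1: a positive secrecy rate is achievable for the complex Gaussian wiretap
channel with arbitrary finite-resolution per-component ADCs at both the legitimate
receiver (gain `w₁`, a `(k¹_R,k¹_I)`-point receiver with thresholds `cR`, `cI`) and the
eavesdropper (gain `w₂`, a `(k²_R,k²_I)`-point receiver with thresholds `qR`, `qI`),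
whenever `|w₁| ≠ |w₂|`. -/
theorem positive_secrecy_complex_general
    (w₁ w₂ : ℂ) (hw₁ : w₁ ≠ 0) (hw₂ : w₂ ≠ 0)
    (hne : ‖w₁‖ ≠ ‖w₂‖)
    (k₁R k₁I : ℕ) (hk₁R : 2 ≤ k₁R) (hk₁I : 2 ≤ k₁I) (cR cI : ℕ → ℝ)
    (hcR : ∀ l : ℕ, 1 ≤ l → l + 1 ≤ k₁R - 1 → cR l < cR (l + 1))
    (hcI : ∀ l : ℕ, 1 ≤ l → l + 1 ≤ k₁I - 1 → cI l < cI (l + 1))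
    (k₂R k₂I : ℕ) (hk₂R : 2 ≤ k₂R) (hk₂I : 2 ≤ k₂I) (qR qI : ℕ → ℝ)
    (hqR : ∀ l : ℕ, 1 ≤ l → l + 1 ≤ k₂R - 1 → qR l < qR (l + 1))
    (hqI : ∀ l : ℕ, 1 ≤ l → l + 1 ≤ k₂I - 1 → qI l < qI (l + 1)) :
    ∃ (φ : ℝ) (x₁ x₂ : ℂ), φ ∈ Set.Ioo (0 : ℝ) 1 ∧
      0 < miADCC w₁ k₁R k₁I cR cI φ x₁ x₂ - miADCC w₂ k₂R k₂I qR qI φ x₁ x₂ := by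
  set ρ : ℂ := w₂ / w₁ with hρdef
  have hρ0 : ρ ≠ 0 := div_ne_zero hw₂ hw₁
  have habsρ : ‖ρ‖ ≠ 1 := by
    rw [hρdef, norm_div]
    intro h
    apply hne
    have h1 : ‖w₁‖ ≠ 0 := by
      simpa using hw₁
    rw [div_eq_one_iff_eq h1] at h
    exact h.symm
  have hw1x : ∀ z : ℂ, w₁ * (w₁⁻¹ * z) = z := fun z => by field_simp
  have hw2x : ∀ z : ℂ, w₂ * (w₁⁻¹ * z) = ρ * z := fun z => by
    rw [hρdef]
    field_simp
    try ring
  suffices h : ∃ x₁ x₂ : ℂ, miADCC w₂ k₂R k₂I qR qI (1/2) x₁ x₂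
      < miADCC w₁ k₁R k₁I cR cI (1/2) x₁ x₂ by
    obtain ⟨x₁, x₂, hx⟩ := h
    exact ⟨1/2, x₁, x₂, ⟨by norm_num, by norm_num⟩, by linarith⟩
  by_cases him : ρ.im = 0
  · -- ρ real
    have hr0 : ρ.re ≠ 0 := by
      intro h
      exact hρ0 (Complex.ext (by simpa using h) (by simpa using him))
    have hr1 : |ρ.re| ≠ 1 := by
      have habs : ‖ρ‖ = |ρ.re| := by
        rw [Complex.norm_def, Complex.normSq_apply, him]
        simp [Real.sqrt_mul_self_eq_abs]
      rw [← habs]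
      exact habsρ
    obtain ⟨t₁, t₂, hlt⟩ := prop1D hk₁R hcR hk₂R hqR hr0 hr1
    refine ⟨w₁⁻¹ * (t₁ : ℂ), w₁⁻¹ * (t₂ : ℂ), ?_⟩
    have hI₁ : miADCC w₁ k₁R k₁I cR cI (1/2) (w₁⁻¹ * (t₁ : ℂ)) (w₁⁻¹ * (t₂ : ℂ))
        = mig (Finset.Icc 1 k₁R) (adcP k₁R cR t₁) (adcP k₁R cR t₂) := by
      rw [miADCC_fact_re hk₁I (by rw [hw1x, hw1x]; simp), hw1x, hw1x,
        Complex.ofReal_re, Complex.ofReal_re]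
    have hI₂ : miADCC w₂ k₂R k₂I qR qI (1/2) (w₁⁻¹ * (t₁ : ℂ)) (w₁⁻¹ * (t₂ : ℂ))
        = mig (Finset.Icc 1 k₂R) (adcP k₂R qR (ρ.re * t₁)) (adcP k₂R qR (ρ.re * t₂)) := by
      have he1 : (w₂ * (w₁⁻¹ * (t₁ : ℂ))).re = ρ.re * t₁ := by
        rw [hw2x]; simp [Complex.mul_re]
      have he2 : (w₂ * (w₁⁻¹ * (t₂ : ℂ))).re = ρ.re * t₂ := by
        rw [hw2x]; simp [Complex.mul_re]
      rw [miADCC_fact_re hk₂I (by rw [hw2x, hw2x]; simp [Complex.mul_im, him]),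
        he1, he2]
    rw [hI₁, hI₂]
    exact hlt
  · by_cases hre : ρ.re = 0
    · -- ρ purely imaginary
      have hr1 : |ρ.im| ≠ 1 := by
        have habs : ‖ρ‖ = |ρ.im| := by
          rw [Complex.norm_def, Complex.normSq_apply, hre]
          simp [Real.sqrt_mul_self_eq_abs]
        rw [← habs]
        exact habsρ
      obtain ⟨t₁, t₂, hlt⟩ := prop1D hk₁R hcR hk₂I hqI him hr1
      refine ⟨w₁⁻¹ * (t₁ : ℂ), w₁⁻¹ * (t₂ : ℂ), ?_⟩
      have hI₁ : miADCC w₁ k₁R k₁I cR cI (1/2) (w₁⁻¹ * (t₁ : ℂ)) (w₁⁻¹ * (t₂ : ℂ))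
          = mig (Finset.Icc 1 k₁R) (adcP k₁R cR t₁) (adcP k₁R cR t₂) := by
        rw [miADCC_fact_re hk₁I (by rw [hw1x, hw1x]; simp), hw1x, hw1x,
          Complex.ofReal_re, Complex.ofReal_re]
      have hI₂ : miADCC w₂ k₂R k₂I qR qI (1/2) (w₁⁻¹ * (t₁ : ℂ)) (w₁⁻¹ * (t₂ : ℂ))
          = mig (Finset.Icc 1 k₂I) (adcP k₂I qI (ρ.im * t₁)) (adcP k₂I qI (ρ.im * t₂)) := by
        have he1 : (w₂ * (w₁⁻¹ * (t₁ : ℂ))).im = ρ.im * t₁ := by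
          rw [hw2x]; simp [Complex.mul_im]
        have he2 : (w₂ * (w₁⁻¹ * (t₂ : ℂ))).im = ρ.im * t₂ := by
          rw [hw2x]; simp [Complex.mul_im]
        rw [miADCC_fact_im hk₂R (by rw [hw2x, hw2x]; simp [Complex.mul_re, hre]),
          he1, he2]
      rw [hI₁, hI₂]
      exact hlt
    · -- non-aligned case
      set L : ℝ := mig (Finset.Icc 1 k₁R) (adcP k₁R cR 2) (adcP k₁R cR 0) with hLdef
      have hmem₁ : (1 : ℕ) ∈ Finset.Icc 1 k₁R := Finset.mem_Icc.2 ⟨le_refl 1, by omega⟩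
      have hL : 0 < L := by
        rw [hLdef]
        refine mig_pos (fun y hy => (adcP_pos hk₁R hcR hy).le)
          (fun y hy => (adcP_pos hk₁R hcR hy).le) hmem₁ ?_
        rw [adcP_bot hk₁R, adcP_bot hk₁R]
        exact ne_of_lt (gaussQ_strict_anti (by linarith))
      set gm : ℝ := min |ρ.re| |ρ.im| with hgmdef
      have hgm : 0 < gm := lt_min (abs_pos.2 hre) (abs_pos.2 him)
      set C : ℝ := 2 * |ρ.re| + 2 * |ρ.im| with hCdef
      set u₁ : ℝ → ℝ := fun T => 2 * ρ.re - T * ρ.im with hu₁def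
      set u₂ : ℝ → ℝ := fun T => -(T * ρ.im) with hu₂def
      set v₁ : ℝ → ℝ := fun T => 2 * ρ.im + T * ρ.re with hv₁def
      set v₂ : ℝ → ℝ := fun T => T * ρ.re with hv₂def
      have hsu : ∀ T, 0 ≤ T → (gm * T - C ≤ u₁ T ∧ gm * T - C ≤ u₂ T)
          ∨ (u₁ T ≤ -(gm * T - C) ∧ u₂ T ≤ -(gm * T - C)) := by
        intro T hT
        have hgmim : gm ≤ |ρ.im| := min_le_right _ _
        have h1 : gm * T ≤ |ρ.im| * T := mul_le_mul_of_nonneg_right hgmim hT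
        have h2 := le_abs_self ρ.re
        have h3 := neg_abs_le ρ.re
        have h4 := abs_nonneg ρ.re
        rcases lt_or_gt_of_ne him with h | h
        · left
          have habsim : |ρ.im| = -ρ.im := abs_of_neg h
          constructor
          · rw [hu₁def, hCdef]; simp only; nlinarith
          · rw [hu₂def, hCdef]; simp only; nlinarith
        · right
          have habsim : |ρ.im| = ρ.im := abs_of_pos h
          constructor
          · rw [hu₁def, hCdef]; simp only; nlinarith
          · rw [hu₂def, hCdef]; simp only; nlinarith
      have hsv : ∀ T, 0 ≤ T → (gm * T - C ≤ v₁ T ∧ gm * T - C ≤ v₂ T)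
          ∨ (v₁ T ≤ -(gm * T - C) ∧ v₂ T ≤ -(gm * T - C)) := by
        intro T hT
        have hgmre : gm ≤ |ρ.re| := min_le_left _ _
        have h1 : gm * T ≤ |ρ.re| * T := mul_le_mul_of_nonneg_right hgmre hT
        have h2 := le_abs_self ρ.im
        have h3 := neg_abs_le ρ.im
        have h4 := abs_nonneg ρ.im
        rcases lt_or_gt_of_ne hre with h | h
        · right
          have habsre : |ρ.re| = -ρ.re := abs_of_neg h
          constructor
          · rw [hv₁def, hCdef]; simp only; nlinarith
          · rw [hv₂def, hCdef]; simp only; nlinarith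
        · left
          have habsre : |ρ.re| = ρ.re := abs_of_pos h
          constructor
          · rw [hv₁def, hCdef]; simp only; nlinarith
          · rw [hv₂def, hCdef]; simp only; nlinarith
      obtain ⟨T, hT⟩ := (mig2D_small hk₂R hk₂I hqR hqI hgm u₁ u₂ v₁ v₂ hsu hsv hL).exists
      refine ⟨w₁⁻¹ * (2 + Complex.I * (T : ℂ)), w₁⁻¹ * (Complex.I * (T : ℂ)), ?_⟩
      have hI₁ : miADCC w₁ k₁R k₁I cR cI (1/2)
          (w₁⁻¹ * (2 + Complex.I * (T : ℂ))) (w₁⁻¹ * (Complex.I * (T : ℂ))) = L := by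
        rw [miADCC_fact_re hk₁I (by rw [hw1x, hw1x]; simp), hw1x, hw1x, hLdef]
        congr 1
        · simp
        · simp
      have hI₂ : miADCC w₂ k₂R k₂I qR qI (1/2)
          (w₁⁻¹ * (2 + Complex.I * (T : ℂ))) (w₁⁻¹ * (Complex.I * (T : ℂ)))
          = mig (Finset.Icc 1 k₂R ×ˢ Finset.Icc 1 k₂I)
            (fun y => adcP k₂R qR (u₁ T) y.1 * adcP k₂I qI (v₁ T) y.2)
            (fun y => adcP k₂R qR (u₂ T) y.1 * adcP k₂I qI (v₂ T) y.2) := by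
        have hre1 : (w₂ * (w₁⁻¹ * (2 + Complex.I * (T : ℂ)))).re = u₁ T := by
          rw [hw2x, hu₁def]
          simp [Complex.mul_re, Complex.add_re, Complex.add_im, Complex.mul_im]
          try ring
        have him1 : (w₂ * (w₁⁻¹ * (2 + Complex.I * (T : ℂ)))).im = v₁ T := by
          rw [hw2x, hv₁def]
          simp [Complex.mul_re, Complex.add_re, Complex.add_im, Complex.mul_im]
          try ring
        have hre2 : (w₂ * (w₁⁻¹ * (Complex.I * (T : ℂ)))).re = u₂ T := by
          rw [hw2x, hu₂def]
          simp [Complex.mul_re, Complex.add_re, Complex.add_im, Complex.mul_im]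
          try ring
        have him2 : (w₂ * (w₁⁻¹ * (Complex.I * (T : ℂ)))).im = v₂ T := by
          rw [hw2x, hv₂def]
          simp [Complex.mul_re, Complex.add_re, Complex.add_im, Complex.mul_im]
          try ring
        have hfun1 : pADCC w₂ k₂R k₂I qR qI (w₁⁻¹ * (2 + Complex.I * (T : ℂ)))
            = fun y => adcP k₂R qR (u₁ T) y.1 * adcP k₂I qI (v₁ T) y.2 := by
          funext y
          unfold pADCC
          rw [hre1, him1]
        have hfun2 : pADCC w₂ k₂R k₂I qR qI (w₁⁻¹ * (Complex.I * (T : ℂ)))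
            = fun y => adcP k₂R qR (u₂ T) y.1 * adcP k₂I qI (v₂ T) y.2 := by
          funext y
          unfold pADCC
          rw [hre2, him2]
        rw [miADCC_eq_mig2, hfun1, hfun2]
      rw [hI₁, hI₂]
      exact hT
end

section
/- For every φ ∈ (0,1), the function f_φ(p) := h(φ(1−p)) − φ·h(p) is strictly decreasing on p ∈ (0,1); in particular, for all 0 < p₁ < p₂ < 1 one has f_φ(p₁) > f_φ(p₂). (Lemma 1: the mutual information of a Z-channel with Bernoulli(φ) input is decreasing in the crossover probability.) -/
open MeasureTheory Real Filter

/-- `f_φ(p) = h(φ(1-p)) - φ·h(p)`, the mutual information of a Z-channel with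
crossover probability `p` and `Bernoulli(φ)` input. -/
noncomputable def fphi (φ p : ℝ) : ℝ := binEnt (φ * (1 - p)) - φ * binEnt p

lemma binEnt_eq (p : ℝ) : binEnt p = Real.binEntropy p := by
  rw [Real.binEntropy_eq_negMulLog_add_negMulLog_one_sub]
  simp [binEnt, eta, Real.negMulLog, neg_mul]

lemma fphi_hasDerivAt (φ p : ℝ) (hφ : φ ∈ Set.Ioo (0:ℝ) 1) (hp : p ∈ Set.Ioo (0:ℝ) 1) :
    HasDerivAt (fphi φ)
      ((Real.log (1 - φ * (1 - p)) - Real.log (φ * (1 - p))) * (-φ)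
        - φ * (Real.log (1 - p) - Real.log p)) p := by
  obtain ⟨hφ0, hφ1⟩ := hφ
  obtain ⟨hp0, hp1⟩ := hp
  have hq0 : 0 < φ * (1 - p) := mul_pos hφ0 (by linarith)
  have hq1 : φ * (1 - p) < 1 := by nlinarith
  have h1 : HasDerivAt (fun p : ℝ => φ * (1 - p)) (-φ) p := by
    simpa using ((hasDerivAt_const p (1:ℝ)).sub (hasDerivAt_id p)).const_mul φ
  have h2 : HasDerivAt (fun p : ℝ => Real.binEntropy (φ * (1 - p)))
      ((Real.log (1 - φ * (1 - p)) - Real.log (φ * (1 - p))) * (-φ)) p :=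
    HasDerivAt.comp (h₂ := Real.binEntropy) p (Real.hasDerivAt_binEntropy hq0.ne' hq1.ne) h1
  have h3 : HasDerivAt (fun p : ℝ => φ * Real.binEntropy p)
      (φ * (Real.log (1 - p) - Real.log p)) p :=
    (Real.hasDerivAt_binEntropy hp0.ne' hp1.ne).const_mul φ
  have hfe : fphi φ = fun p => Real.binEntropy (φ * (1 - p)) - φ * Real.binEntropy p := by
    funext x; simp [fphi, binEnt_eq]
  rw [hfe]
  simpa using h2.fun_sub h3

/-- Lemma 1: for every `φ ∈ (0,1)`, the function `f_φ` is strictly decreasing on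
`(0,1)`; in particular `f_φ(p₁) > f_φ(p₂)` whenever `0 < p₁ < p₂ < 1`. -/
theorem fphi_strictAntiOn (φ : ℝ) (hφ : φ ∈ Set.Ioo (0 : ℝ) 1) :
    StrictAntiOn (fphi φ) (Set.Ioo (0 : ℝ) 1) ∧
      ∀ p₁ p₂ : ℝ, 0 < p₁ → p₁ < p₂ → p₂ < 1 → fphi φ p₂ < fphi φ p₁ := by
  obtain ⟨hφ0, hφ1⟩ := hφ
  have key : StrictAntiOn (fphi φ) (Set.Ioo (0 : ℝ) 1) := by
    apply strictAntiOn_of_deriv_neg (convex_Ioo 0 1)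
    · apply ContinuousOn.sub
      · apply Continuous.continuousOn
        have : Continuous fun p : ℝ => Real.binEntropy (φ * (1 - p)) := by
          fun_prop
        have hbe : binEnt = Real.binEntropy := funext binEnt_eq
        simpa [hbe] using this
      · have hbe : binEnt = Real.binEntropy := funext binEnt_eq
        exact (continuous_const.mul (hbe ▸ Real.binEntropy_continuous)).continuousOn
    · intro p hp
      rw [interior_Ioo] at hp
      rw [(fphi_hasDerivAt φ p ⟨hφ0, hφ1⟩ hp).deriv]
      obtain ⟨hp0, hp1⟩ := hp
      have hq0 : 0 < φ * (1 - p) := mul_pos hφ0 (by linarith)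
      have hq1 : φ * (1 - p) < 1 := by nlinarith
      have hkey : Real.log (φ * (1 - p)) + Real.log p
          < Real.log (1 - φ * (1 - p)) + Real.log (1 - p) := by
        rw [← Real.log_mul hq0.ne' hp0.ne', ← Real.log_mul (by linarith) (by linarith : (0:ℝ) < 1 - p).ne']
        apply Real.log_lt_log (mul_pos hq0 hp0)
        nlinarith
      nlinarith
  refine ⟨key, fun p₁ p₂ h1 h12 h21 => key ⟨h1, h12.trans h21⟩ ⟨h1.trans h12, h21⟩ h12⟩
end
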